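/- arXiv:1902.00992 — 5 statements merged into one kernel-verified Lean document; each statement's English description precedes it below -/
import Mathlib

section
/- Let (Ω,Σ,P) be a probability space, let K be a convex set of random variables that is bounded in L^1(P), and let S be a nonempty set of random variables. The following are equivalent: (1) there exists a probability measure Q equivalent to P such that whenever a sequence (X_n) in K converges in P-probability to some X ∈ S, then E_Q[|X_n − X|] → 0; (2) for every ε > 0 there exists a measurable set A with P(A) > 1 − ε such that whenever a sequence (X_n) in K converges in P-probability to some X ∈ S, then E_P[|X_n − X|·1_A] → 0; (3) for every measurable set A with P(A) > 0 there exists a measurable subset B of A with P(B) > 0 such that whenever a sequence (X_n) in K converges in P-probability to some X ∈ S, then E_P[|X_n − X|·1_B] → 0. -/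
open MeasureTheory Filter Set ProbabilityTheory

noncomputable section

namespace Paper

variable {Ω : Type*} [MeasurableSpace Ω]

/-- The metric `d(X,Y) = E_P[min(|X - Y|, 1)]` metrizing convergence in `P`-probability. -/
def probDist (P : Measure Ω) (X Y : Ω → ℝ) : ℝ :=
  ∫ ω, min |X ω - Y ω| 1 ∂P

/-- `Q` is a probability measure equivalent to `P` (mutually absolutely continuous). -/
def EquivProb (P Q : Measure Ω) : Prop :=
  IsProbabilityMeasure Q ∧ Q ≪ P ∧ P ≪ Q

/-- `K` is a set of `P`-integrable random variables bounded in `L¹(P)`. -/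
def BddL1 (P : Measure Ω) (K : Set (Ω → ℝ)) : Prop :=
  (∀ X ∈ K, Integrable X P) ∧ ∃ C : ℝ, ∀ X ∈ K, (∫ ω, |X ω| ∂P) ≤ C

/-- `K` is `Q`-uniformly integrable: all members are `Q`-integrable and
`sup_{X ∈ K} E_Q[|X| · 1_{|X| > c}] → 0` as `c → ∞`. -/
def UIset (Q : Measure Ω) (K : Set (Ω → ℝ)) : Prop :=
  (∀ X ∈ K, Integrable X Q) ∧
  ∀ ε : ℝ, 0 < ε → ∃ c : ℝ, ∀ X ∈ K, (∫ ω in {ω | c < |X ω|}, |X ω| ∂Q) < ε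

/-- The sequence `Xs` is Cauchy in `P`-probability. -/
def CauchyInProb (P : Measure Ω) (Xs : ℕ → Ω → ℝ) : Prop :=
  ∀ ε : ℝ, 0 < ε →
    Tendsto (fun p : ℕ × ℕ => P {ω | ε ≤ |Xs p.1 ω - Xs p.2 ω|}) atTop (nhds 0)

/-- The (sequential) closure of `K` in the topology of convergence in `P`-probability. -/
def probClosure (P : Measure Ω) (K : Set (Ω → ℝ)) : Set (Ω → ℝ) :=
  {X | ∃ Xs : ℕ → Ω → ℝ, (∀ n, Xs n ∈ K) ∧ TendstoInMeasure P Xs atTop X}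

/-- A set `W` of random variables is solid: if `X ∈ W` and `|Y| ≤ |X|` a.s. then `Y ∈ W`. -/
def SolidSet (P : Measure Ω) (W : Set (Ω → ℝ)) : Prop :=
  ∀ X ∈ W, ∀ Y : Ω → ℝ, AEStronglyMeasurable Y P →
    (∀ᵐ ω ∂P, |Y ω| ≤ |X ω|) → Y ∈ W

/-- The solid hull of a set `A` of random variables. -/
def solidHull (P : Measure Ω) (A : Set (Ω → ℝ)) : Set (Ω → ℝ) :=
  {Y | AEStronglyMeasurable Y P ∧ ∃ X ∈ A, ∀ᵐ ω ∂P, |Y ω| ≤ |X ω|}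

/-- The relative `L⁰(P)`-topology on `K` is uniformly locally convex-solid on `S`:
for every `ε > 0` there is a convex solid set `W` of integrable random variables contained in the
`ε`-ball around `0` such that, for each `X ∈ S`, `(X + W) ∩ K` contains a `d`-ball of `K`
around `X`. -/
def UnifLCS (P : Measure Ω) (K S : Set (Ω → ℝ)) : Prop :=
  ∀ ε : ℝ, 0 < ε → ∃ W : Set (Ω → ℝ),
    (∀ Z ∈ W, Integrable Z P) ∧ Convex ℝ W ∧ SolidSet P W ∧
    (∀ Z ∈ W, probDist P Z 0 < ε) ∧
    ∀ X ∈ S, ∃ δ : ℝ, 0 < δ ∧ ∀ Z ∈ K, probDist P Z X < δ → Z - X ∈ W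

/-- The `L⁰(Q)`- and `L¹(Q)`-topologies agree on `K`: a sequence in `K` converges in
`P`-probability to a member of `K` iff it converges in `L¹(Q)`-norm. -/
def TopAgree (P Q : Measure Ω) (K : Set (Ω → ℝ)) : Prop :=
  ∀ (Xs : ℕ → Ω → ℝ) (X : Ω → ℝ), (∀ n, Xs n ∈ K) → X ∈ K →
    (TendstoInMeasure P Xs atTop X ↔
      Tendsto (fun n => ∫⁻ ω, ENNReal.ofReal |Xs n ω - X ω| ∂Q) atTop (nhds 0))

/-- `W` is a forward convex combination of the sequence `Z`. -/
def IsFCC (Z : ℕ → Ω → ℝ) (W : ℕ → Ω → ℝ) : Prop :=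
  ∀ k, W k ∈ convexHull ℝ (Z '' {n | k ≤ n})

/-- The relative `L⁰(P)`-topology on `K` is locally convex at `X` (forward convex combination
formulation): every FCC of a sequence in `K` converging to `X` in probability also converges
to `X` in probability. -/
def LocConvexAt (P : Measure Ω) (K : Set (Ω → ℝ)) (X : Ω → ℝ) : Prop :=
  ∀ Xs : ℕ → Ω → ℝ, (∀ n, Xs n ∈ K) → TendstoInMeasure P Xs atTop X →
    ∀ W : ℕ → Ω → ℝ, IsFCC Xs W → TendstoInMeasure P W atTop X

/-- The set `L = {Σ_k a_k R_k : Σ_k |a_k| ≤ 1}` (with pointwise a.e. absolutely convergent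
series, which also converge in `L¹(P)`). -/
def Lset (R : ℕ → Ω → ℝ) : Set (Ω → ℝ) :=
  {G | ∃ a : ℕ → ℝ, Summable (fun k => |a k|) ∧ (∑' k, |a k|) ≤ 1 ∧
    G = fun ω => ∑' k, a k * R k ω}

/-- The standard Cauchy distribution on `ℝ`. -/
def cauchyLaw : Measure ℝ :=
  MeasureTheory.volume.withDensity (fun t => ENNReal.ofReal (1 / (Real.pi * (1 + t ^ 2))))

/-- Local convexity of the relative topology on `A ⊆ E` at a point `x ∈ A`, in a topological
vector space. -/
def LocConvexAtTVS {E : Type*} [AddCommGroup E] [Module ℝ E] [TopologicalSpace E]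
    (A : Set E) (x : E) : Prop :=
  ∀ V ∈ nhds (0 : E), ∃ U ∈ nhds (0 : E), ∃ C : Set E,
    Convex ℝ C ∧ ((fun u => x + u) '' U) ∩ A ⊆ C ∧ C ⊆ ((fun v => x + v) '' V) ∩ A

open scoped ENNReal

section AuxProof

variable {P : Measure Ω} {K S : Set (Ω → ℝ)}

private def Good (P : Measure Ω) (K S : Set (Ω → ℝ)) (B : Set Ω) : Prop :=
  MeasurableSet B ∧
  ∀ (Xs : ℕ → Ω → ℝ) (X : Ω → ℝ), (∀ n, Xs n ∈ K) → X ∈ S →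
    TendstoInMeasure P Xs atTop X →
    Tendsto (fun n => ∫⁻ ω in B, ENNReal.ofReal |Xs n ω - X ω| ∂P) atTop (nhds 0)

private lemma squeeze0 {f g : ℕ → ℝ≥0∞} (hg : Tendsto g atTop (nhds 0))
    (h : ∀ n, f n ≤ g n) : Tendsto f atTop (nhds 0) :=
  tendsto_of_tendsto_of_tendsto_of_le_of_le tendsto_const_nhds hg (fun n => zero_le) h

private lemma good_empty : Good P K S ∅ :=
  ⟨MeasurableSet.empty, fun _ _ _ _ _ => by simp⟩

private lemma good_union {B B' : Set Ω} (hB : Good P K S B) (hB' : Good P K S B') :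
    Good P K S (B ∪ B') :=
  ⟨hB.1.union hB'.1, fun Xs X h1 h2 h3 => by
    have h := (hB.2 Xs X h1 h2 h3).add (hB'.2 Xs X h1 h2 h3)
    rw [add_zero] at h
    exact squeeze0 h (fun n => lintegral_union_le _ _ _)⟩

private lemma geo_sum : (∑' n : ℕ, (2 : ℝ≥0∞)⁻¹ ^ (n + 1)) = 1 := by
  simp_rw [pow_succ']
  rw [ENNReal.tsum_mul_left, ENNReal.tsum_geometric, ENNReal.one_sub_inv_two, inv_inv,
    ENNReal.inv_mul_cancel two_ne_zero ENNReal.ofNat_ne_top]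

private lemma three_to_one (P : Measure Ω) [IsProbabilityMeasure P] {K S : Set (Ω → ℝ)}
    (hKbdd : BddL1 P K) (hSmeas : ∀ X ∈ S, AEStronglyMeasurable X P)
    (h3 : ∀ A : Set Ω, MeasurableSet A → 0 < P A →
          ∃ B ⊆ A, MeasurableSet B ∧ 0 < P B ∧
          ∀ (Xs : ℕ → Ω → ℝ) (X : Ω → ℝ), (∀ n, Xs n ∈ K) → X ∈ S →
            TendstoInMeasure P Xs atTop X →
            Tendsto (fun n => ∫⁻ ω in B, ENNReal.ofReal |Xs n ω - X ω| ∂P) atTop (nhds 0)) :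
    ∃ Q : Measure Ω, EquivProb P Q ∧
      ∀ (Xs : ℕ → Ω → ℝ) (X : Ω → ℝ), (∀ n, Xs n ∈ K) → X ∈ S →
        TendstoInMeasure P Xs atTop X →
        Tendsto (fun n => ∫⁻ ω, ENNReal.ofReal |Xs n ω - X ω| ∂Q) atTop (nhds 0) := by
  classical
  set m : ℝ≥0∞ := sSup ((fun B => P B) '' {B | Good P K S B}) with hm
  have hm_le : m ≤ 1 := sSup_le (by rintro x ⟨B, _, rfl⟩; exact prob_le_one)
  have hm_ne : m ≠ ⊤ := (hm_le.trans_lt ENNReal.one_lt_top).ne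
  have hseq : ∀ n : ℕ, ∃ B, Good P K S B ∧ m ≤ P B + (n : ℝ≥0∞)⁻¹ := by
    intro n
    rcases eq_or_ne m 0 with h0 | h0
    · exact ⟨∅, good_empty, by simp [h0]⟩
    rcases eq_or_ne n 0 with hn | hn
    · exact ⟨∅, good_empty, by simp [hn]⟩
    have hlt : m - (n : ℝ≥0∞)⁻¹ < m :=
      ENNReal.sub_lt_self hm_ne h0 (by simp [hn])
    rw [hm, lt_sSup_iff] at hlt
    obtain ⟨x, ⟨B, hB, rfl⟩, hx⟩ := hlt
    exact ⟨B, hB, tsub_le_iff_right.mp hx.le⟩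
  choose B hBgood hBle using hseq
  set U : Set Ω := ⋃ n, B n with hU
  have hUm : MeasurableSet U := MeasurableSet.iUnion fun n => (hBgood n).1
  have hUc : P Uᶜ = 0 := by
    by_contra h0
    obtain ⟨C, hCU, hCm, hCpos, hCconv⟩ := h3 Uᶜ hUm.compl (pos_iff_ne_zero.mpr h0)
    have hCgood : Good P K S C := ⟨hCm, hCconv⟩
    have key : ∀ n : ℕ, P C ≤ (n : ℝ≥0∞)⁻¹ := by
      intro n
      have hdis : Disjoint (B n) C :=
        disjoint_compl_right.mono_right
          (hCU.trans (compl_subset_compl.mpr (subset_iUnion B n)))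
      have hle : P (B n ∪ C) ≤ m :=
        le_sSup ⟨B n ∪ C, good_union (hBgood n) hCgood, rfl⟩
      have hun : P (B n ∪ C) = P (B n) + P C := measure_union hdis hCm
      have hfin : m + P C ≤ m + (n : ℝ≥0∞)⁻¹ := by
        calc m + P C ≤ (P (B n) + (n : ℝ≥0∞)⁻¹) + P C := add_le_add_left (hBle n) _
          _ = P (B n ∪ C) + (n : ℝ≥0∞)⁻¹ := by rw [hun]; ring
          _ ≤ m + (n : ℝ≥0∞)⁻¹ := add_le_add_left hle _
      exact (ENNReal.add_le_add_iff_left hm_ne).mp hfin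
    have hle0 : P C ≤ 0 := ge_of_tendsto' ENNReal.tendsto_inv_nat_nhds_zero key
    exact absurd (le_antisymm hle0 zero_le) hCpos.ne'
  have hUae : ∀ᵐ ω ∂P, ω ∈ U := by
    rw [ae_iff]
    simpa [compl_def] using hUc
  -- the density
  set g : Ω → ℝ≥0∞ := fun ω => ∑' n, (B n).indicator (fun _ => (2 : ℝ≥0∞)⁻¹ ^ (n + 1)) ω with hg
  have hgm : Measurable g := Measurable.ennreal_tsum fun n => measurable_const.indicator (hBgood n).1
  have hgpos : ∀ ω ∈ U, g ω ≠ 0 := by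
    intro ω hω
    obtain ⟨n, hn⟩ := mem_iUnion.mp hω
    have h1 : (2 : ℝ≥0∞)⁻¹ ^ (n + 1) ≤ g ω := by
      have h := ENNReal.le_tsum (f := fun n => (B n).indicator (fun _ => (2 : ℝ≥0∞)⁻¹ ^ (n + 1)) ω) n
      simpa [Set.indicator_of_mem hn] using h
    intro h0
    rw [h0, nonpos_iff_eq_zero] at h1
    exact pow_ne_zero _ (ENNReal.inv_ne_zero.mpr ENNReal.ofNat_ne_top) h1
  set ν : Measure Ω := P.withDensity g with hν
  have hm0 : ν Set.univ = ∫⁻ ω, g ω ∂P := by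
    rw [hν, withDensity_apply _ MeasurableSet.univ, Measure.restrict_univ]
  have hglint : ∫⁻ ω, g ω ∂P = ∑' n, (2 : ℝ≥0∞)⁻¹ ^ (n + 1) * P (B n) := by
    rw [hg, lintegral_tsum (fun n => (measurable_const.indicator (hBgood n).1).aemeasurable)]
    congr 1
    funext n
    rw [lintegral_indicator (hBgood n).1 _, setLIntegral_const]
  have hν_ne_top : ν Set.univ ≠ ⊤ := by
    rw [hm0, hglint]
    have h1 : (∑' n, (2 : ℝ≥0∞)⁻¹ ^ (n + 1) * P (B n)) ≤ ∑' n : ℕ, (2 : ℝ≥0∞)⁻¹ ^ (n + 1) := by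
      refine ENNReal.tsum_le_tsum fun n => ?_
      simpa using mul_le_mul_right prob_le_one ((2 : ℝ≥0∞)⁻¹ ^ (n + 1))
    rw [geo_sum] at h1
    exact (h1.trans_lt ENNReal.one_lt_top).ne
  have hν_ne_zero : ν Set.univ ≠ 0 := by
    intro h0
    rw [hm0] at h0
    have hg0 := (lintegral_eq_zero_iff hgm).mp h0
    have hU0 : P U = 0 := by
      refine measure_mono_null (fun ω hω => ?_) (ae_iff.mp hg0)
      exact hgpos ω hω
    have : (1 : ℝ≥0∞) ≤ 0 := by
      calc (1 : ℝ≥0∞) = P Set.univ := (measure_univ).symm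
        _ = P (U ∪ Uᶜ) := by rw [union_compl_self]
        _ ≤ P U + P Uᶜ := measure_union_le _ _
        _ = 0 := by rw [hU0, hUc, add_zero]
    simp at this
  refine ⟨(ν Set.univ)⁻¹ • ν, ⟨?_, ?_, ?_⟩, ?_⟩
  · exact ⟨by rw [Measure.smul_apply, smul_eq_mul,
      ENNReal.inv_mul_cancel hν_ne_zero hν_ne_top]⟩
  · intro t ht
    have : ν t = 0 := withDensity_absolutelyContinuous P g ht
    simp [Measure.smul_apply, this]
  · intro t ht
    rw [Measure.smul_apply, smul_eq_mul, mul_eq_zero] at ht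
    rcases ht with ht | ht
    · exact absurd ht (ENNReal.inv_ne_zero.mpr hν_ne_top)
    · -- ν t = 0 → P t = 0
      set t' := toMeasurable ν t with ht'
      have ht'm : MeasurableSet t' := measurableSet_toMeasurable ν t
      have hνt' : ν t' = 0 := by rw [measure_toMeasurable]; exact ht
      rw [hν, withDensity_apply _ ht'm] at hνt'
      have hae := (setLIntegral_eq_zero_iff ht'm hgm).mp hνt'
      have : ∀ᵐ ω ∂P, ω ∉ t' := by
        filter_upwards [hae, hUae] with ω h1 h2
        intro hmem
        exact hgpos ω h2 (h1 hmem)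
      exact measure_mono_null (subset_toMeasurable ν t) (measure_eq_zero_iff_ae_notMem.mpr this)
  · intro Xs X hXs hX hT
    obtain ⟨hKint, C, hC⟩ := hKbdd
    have hdm : ∀ Y : Ω → ℝ, AEStronglyMeasurable Y P →
        AEMeasurable (fun ω => ENNReal.ofReal |Y ω|) P := by
      intro Y hY
      have h2 : AEMeasurable (fun ω => |Y ω|) P := by
        simpa [Real.norm_eq_abs] using hY.norm.aemeasurable
      exact h2.ennreal_ofReal
    have hXm : AEStronglyMeasurable X P := hSmeas X hX
    have hXsm : ∀ n, AEStronglyMeasurable (Xs n) P := fun n => (hKint _ (hXs n)).1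
    have hdiffm : ∀ n, AEMeasurable (fun ω => ENNReal.ofReal |Xs n ω - X ω|) P :=
      fun n => hdm _ ((hXsm n).sub hXm)
    have hIk : ∀ k, Tendsto (fun n => ∫⁻ ω in B k, ENNReal.ofReal |Xs n ω - X ω| ∂P)
        atTop (nhds 0) := fun k => (hBgood k).2 Xs X hXs hX hT
    set Cb := ENNReal.ofReal C with hCb
    have hXsL : ∀ n, ∫⁻ ω, ENNReal.ofReal |Xs n ω| ∂P ≤ Cb := by
      intro n
      have hint := (hKint _ (hXs n)).abs
      rw [← ofReal_integral_eq_lintegral_ofReal hint (ae_of_all _ fun ω => abs_nonneg _)]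
      exact ENNReal.ofReal_le_ofReal (hC _ (hXs n))
    have hXk : ∀ k, ∫⁻ ω in B k, ENNReal.ofReal |X ω| ∂P ≤ Cb + 1 := by
      intro k
      obtain ⟨n₀, hn₀⟩ :=
        (Filter.Tendsto.eventually_lt_const (by norm_num : (0 : ℝ≥0∞) < 1) (hIk k)).exists
      calc ∫⁻ ω in B k, ENNReal.ofReal |X ω| ∂P
          ≤ ∫⁻ ω in B k, (ENNReal.ofReal |Xs n₀ ω| + ENNReal.ofReal |Xs n₀ ω - X ω|) ∂P := by
            refine lintegral_mono fun ω => ?_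
            calc ENNReal.ofReal |X ω|
                ≤ ENNReal.ofReal (|Xs n₀ ω| + |Xs n₀ ω - X ω|) := by
                  refine ENNReal.ofReal_le_ofReal ?_
                  calc |X ω| = |Xs n₀ ω - (Xs n₀ ω - X ω)| := by rw [sub_sub_cancel]
                    _ ≤ |Xs n₀ ω| + |Xs n₀ ω - X ω| := abs_sub _ _
              _ ≤ ENNReal.ofReal |Xs n₀ ω| + ENNReal.ofReal |Xs n₀ ω - X ω| :=
                  ENNReal.ofReal_add_le
        _ = (∫⁻ ω in B k, ENNReal.ofReal |Xs n₀ ω| ∂P) +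
            ∫⁻ ω in B k, ENNReal.ofReal |Xs n₀ ω - X ω| ∂P :=
            lintegral_add_left' ((hdm _ (hXsm n₀)).restrict) _
        _ ≤ Cb + 1 :=
            add_le_add ((setLIntegral_le_lintegral _ _).trans (hXsL n₀)) hn₀.le
    have hbound : ∀ n k, ∫⁻ ω in B k, ENNReal.ofReal |Xs n ω - X ω| ∂P ≤ Cb + (Cb + 1) := by
      intro n k
      calc ∫⁻ ω in B k, ENNReal.ofReal |Xs n ω - X ω| ∂P
          ≤ ∫⁻ ω in B k, (ENNReal.ofReal |Xs n ω| + ENNReal.ofReal |X ω|) ∂P := by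
            refine lintegral_mono fun ω => ?_
            exact (ENNReal.ofReal_le_ofReal (abs_sub _ _)).trans ENNReal.ofReal_add_le
        _ = (∫⁻ ω in B k, ENNReal.ofReal |Xs n ω| ∂P) + ∫⁻ ω in B k, ENNReal.ofReal |X ω| ∂P :=
            lintegral_add_left' ((hdm _ (hXsm n)).restrict) _
        _ ≤ Cb + (Cb + 1) :=
            add_le_add ((setLIntegral_le_lintegral _ _).trans (hXsL n)) (hXk k)
    have hrw : ∀ n, ∫⁻ ω, ENNReal.ofReal |Xs n ω - X ω| ∂((ν Set.univ)⁻¹ • ν) =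
        (ν Set.univ)⁻¹ *
          ∑' k, (2 : ℝ≥0∞)⁻¹ ^ (k + 1) * ∫⁻ ω in B k, ENNReal.ofReal |Xs n ω - X ω| ∂P := by
      intro n
      rw [lintegral_smul_measure]
      congr 1
      rw [hν, lintegral_withDensity_eq_lintegral_mul₀ hgm.aemeasurable (hdiffm n)]
      have heq : (fun ω => (g * fun ω => ENNReal.ofReal |Xs n ω - X ω|) ω) =
          fun ω => ∑' k, (B k).indicator
            (fun ω => (2 : ℝ≥0∞)⁻¹ ^ (k + 1) * ENNReal.ofReal |Xs n ω - X ω|) ω := by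
        funext ω
        simp only [Pi.mul_apply, hg]
        rw [← ENNReal.tsum_mul_right]
        congr 1
        funext k
        by_cases hω : ω ∈ B k <;> simp [hω]
      rw [heq, lintegral_tsum]
      · congr 1
        funext k
        rw [lintegral_indicator (hBgood k).1 _,
          lintegral_const_mul' _ _ (ENNReal.pow_ne_top (ENNReal.inv_ne_top.mpr two_ne_zero))]
      · intro k
        exact ((hdiffm n).const_mul _).indicator (hBgood k).1
    simp only [hrw]
    have htsum : Tendsto (fun n => ∑' k, (2 : ℝ≥0∞)⁻¹ ^ (k + 1) *
        ∫⁻ ω in B k, ENNReal.ofReal |Xs n ω - X ω| ∂P) atTop (nhds 0) := by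
      have hcount : ∀ n : ℕ, (∑' k, (2 : ℝ≥0∞)⁻¹ ^ (k + 1) *
          ∫⁻ ω in B k, ENNReal.ofReal |Xs n ω - X ω| ∂P) =
          ∫⁻ k, (2 : ℝ≥0∞)⁻¹ ^ (k + 1) *
            ∫⁻ ω in B k, ENNReal.ofReal |Xs n ω - X ω| ∂P ∂(Measure.count) :=
        fun n => (lintegral_count _).symm
      simp only [hcount]
      have hint : ∫⁻ k, (2 : ℝ≥0∞)⁻¹ ^ (k + 1) * (Cb + (Cb + 1)) ∂(Measure.count) ≠ ⊤ := by
        rw [lintegral_count, ENNReal.tsum_mul_right, geo_sum, one_mul]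
        exact ENNReal.add_ne_top.mpr ⟨ENNReal.ofReal_ne_top,
          ENNReal.add_ne_top.mpr ⟨ENNReal.ofReal_ne_top, ENNReal.one_ne_top⟩⟩
      have hlim : ∀ᵐ k ∂(Measure.count : Measure ℕ), Tendsto
          (fun n => (2 : ℝ≥0∞)⁻¹ ^ (k + 1) * ∫⁻ ω in B k, ENNReal.ofReal |Xs n ω - X ω| ∂P)
          atTop (nhds ((fun _ : ℕ => (0 : ℝ≥0∞)) k)) := by
        refine ae_of_all _ fun k => ?_
        have h := ENNReal.Tendsto.const_mul (a := (2 : ℝ≥0∞)⁻¹ ^ (k + 1)) (hIk k)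
          (Or.inr (ENNReal.pow_ne_top (ENNReal.inv_ne_top.mpr two_ne_zero)))
        simpa using h
      have h := tendsto_lintegral_of_dominated_convergence
        (μ := (Measure.count : Measure ℕ))
        (F := fun n k => (2 : ℝ≥0∞)⁻¹ ^ (k + 1) * ∫⁻ ω in B k, ENNReal.ofReal |Xs n ω - X ω| ∂P)
        (f := fun _ => 0)
        (fun k => (2 : ℝ≥0∞)⁻¹ ^ (k + 1) * (Cb + (Cb + 1)))
        (fun n => measurable_of_countable _)
        (fun n => ae_of_all _ fun k => mul_le_mul_right (hbound n k) _)
        hint hlim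
      simpa using h
    have hfinal := ENNReal.Tendsto.const_mul (a := (ν Set.univ)⁻¹) htsum
      (Or.inr (ENNReal.inv_ne_top.mpr hν_ne_zero))
    simpa using hfinal

private lemma two_to_three (P : Measure Ω) [IsProbabilityMeasure P] {K S : Set (Ω → ℝ)}
    (h2 : ∀ ε : ℝ, 0 < ε → ∃ A : Set Ω, MeasurableSet A ∧ 1 - ε < (P A).toReal ∧
          ∀ (Xs : ℕ → Ω → ℝ) (X : Ω → ℝ), (∀ n, Xs n ∈ K) → X ∈ S →
            TendstoInMeasure P Xs atTop X →
            Tendsto (fun n => ∫⁻ ω in A, ENNReal.ofReal |Xs n ω - X ω| ∂P) atTop (nhds 0)) :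
    ∀ A : Set Ω, MeasurableSet A → 0 < P A →
          ∃ B ⊆ A, MeasurableSet B ∧ 0 < P B ∧
          ∀ (Xs : ℕ → Ω → ℝ) (X : Ω → ℝ), (∀ n, Xs n ∈ K) → X ∈ S →
            TendstoInMeasure P Xs atTop X →
            Tendsto (fun n => ∫⁻ ω in B, ENNReal.ofReal |Xs n ω - X ω| ∂P) atTop (nhds 0) := by
  intro A hA hApos
  have hAne : P A ≠ ⊤ := measure_ne_top _ _
  have hεpos : 0 < (P A).toReal := ENNReal.toReal_pos hApos.ne' hAne
  obtain ⟨A', hA', hA'big, hA'conv⟩ := h2 _ hεpos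
  refine ⟨A ∩ A', inter_subset_left, hA.inter hA', ?_, ?_⟩
  · rw [pos_iff_ne_zero]
    intro h0
    have hun := measure_union_add_inter A hA' (μ := P)
    rw [h0, add_zero] at hun
    have hle : P A + P A' ≤ 1 := hun ▸ prob_le_one
    have h' : (P A).toReal + (P A').toReal ≤ 1 := by
      rw [← ENNReal.toReal_add hAne (measure_ne_top _ _), ← ENNReal.toReal_one]
      exact ENNReal.toReal_mono ENNReal.one_ne_top hle
    linarith
  · intro Xs X h1 h2' h3
    exact squeeze0 (hA'conv Xs X h1 h2' h3) (fun n => lintegral_mono_set inter_subset_right)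

private lemma one_to_two (P : Measure Ω) [IsProbabilityMeasure P] {K S : Set (Ω → ℝ)}
    (hKbdd : BddL1 P K) (hSmeas : ∀ X ∈ S, AEStronglyMeasurable X P)
    (h1 : ∃ Q : Measure Ω, EquivProb P Q ∧
          ∀ (Xs : ℕ → Ω → ℝ) (X : Ω → ℝ), (∀ n, Xs n ∈ K) → X ∈ S →
            TendstoInMeasure P Xs atTop X →
            Tendsto (fun n => ∫⁻ ω, ENNReal.ofReal |Xs n ω - X ω| ∂Q) atTop (nhds 0)) :
    ∀ ε : ℝ, 0 < ε → ∃ A : Set Ω, MeasurableSet A ∧ 1 - ε < (P A).toReal ∧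
      ∀ (Xs : ℕ → Ω → ℝ) (X : Ω → ℝ), (∀ n, Xs n ∈ K) → X ∈ S →
        TendstoInMeasure P Xs atTop X →
        Tendsto (fun n => ∫⁻ ω in A, ENNReal.ofReal |Xs n ω - X ω| ∂P) atTop (nhds 0) := by
  obtain ⟨Q, ⟨hQprob, hQP, hPQ⟩, hQ⟩ := h1
  haveI := hQprob
  intro ε hε
  set f := P.rnDeriv Q with hf
  have hfm : Measurable f := Measure.measurable_rnDeriv P Q
  have hPd : Q.withDensity f = P := Measure.withDensity_rnDeriv_eq P Q hPQ
  set s : ℕ → Set Ω := fun c => {ω | (c : ℝ≥0∞) < f ω} with hs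
  have hsm : ∀ c, MeasurableSet (s c) := fun c => measurableSet_lt measurable_const hfm
  have hanti : Antitone s := fun i j hij ω hω =>
    lt_of_le_of_lt ((Nat.cast_le (α := ℝ≥0∞)).mpr hij) hω
  have hinter : P (⋂ c, s c) = 0 := by
    have hsub : (⋂ c, s c) ⊆ {ω | f ω = ⊤} := by
      intro ω hω
      by_contra h
      obtain ⟨n, hn⟩ := ENNReal.exists_nat_gt h
      exact lt_irrefl _ (hn.trans (mem_iInter.mp hω n))
    have hQnull : Q {ω | f ω = ⊤} = 0 := by
      simpa [ae_iff, not_lt, top_le_iff] using Measure.rnDeriv_lt_top P Q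
    exact measure_mono_null hsub (hPQ hQnull)
  have htend : Tendsto (fun c => P (s c)) atTop (nhds 0) := by
    have h := tendsto_measure_iInter_atTop (μ := P)
      (fun c => (hsm c).nullMeasurableSet) hanti ⟨0, measure_ne_top _ _⟩
    rw [hinter] at h
    exact h
  have hev : ∀ᶠ c in atTop, P (s c) < ENNReal.ofReal ε :=
    Filter.Tendsto.eventually_lt_const (ENNReal.ofReal_pos.mpr hε) htend
  obtain ⟨c, hc⟩ := hev.exists
  refine ⟨(s c)ᶜ, (hsm c).compl, ?_, ?_⟩
  · have h1 : (P (s c)).toReal < ε :=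
      (ENNReal.lt_ofReal_iff_toReal_lt (measure_ne_top _ _)).mp hc
    have h2 : (P (s c)ᶜ).toReal = 1 - (P (s c)).toReal := by
      rw [measure_compl (hsm c) (measure_ne_top _ _), measure_univ,
        ENNReal.toReal_sub_of_le prob_le_one ENNReal.one_ne_top, ENNReal.toReal_one]
    linarith
  · intro Xs X hXs hX hT
    have hQ0 := hQ Xs X hXs hX hT
    have key : ∀ n, ∫⁻ ω in (s c)ᶜ, ENNReal.ofReal |Xs n ω - X ω| ∂P ≤
        (c : ℝ≥0∞) * ∫⁻ ω, ENNReal.ofReal |Xs n ω - X ω| ∂Q := by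
      intro n
      have hhm : AEMeasurable (fun ω => ENNReal.ofReal |Xs n ω - X ω|) Q := by
        have h1 : AEStronglyMeasurable (fun ω => Xs n ω - X ω) P :=
          ((hKbdd.1 _ (hXs n)).1).sub (hSmeas X hX)
        have h2 : AEStronglyMeasurable (fun ω => Xs n ω - X ω) Q := h1.mono_ac hQP
        have h3 : AEMeasurable (fun ω => |Xs n ω - X ω|) Q := by
          simpa [Real.norm_eq_abs] using h2.norm.aemeasurable
        exact h3.ennreal_ofReal
      have hrestr : P.restrict (s c)ᶜ = (Q.restrict (s c)ᶜ).withDensity f := by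
        rw [← hPd, restrict_withDensity (hsm c).compl]
      calc ∫⁻ ω in (s c)ᶜ, ENNReal.ofReal |Xs n ω - X ω| ∂P
          = ∫⁻ ω, (f * fun ω => ENNReal.ofReal |Xs n ω - X ω|) ω ∂(Q.restrict (s c)ᶜ) := by
            rw [hrestr, lintegral_withDensity_eq_lintegral_mul₀
              hfm.aemeasurable.restrict hhm.restrict]
        _ ≤ ∫⁻ ω, (c : ℝ≥0∞) * ENNReal.ofReal |Xs n ω - X ω| ∂(Q.restrict (s c)ᶜ) := by
            apply lintegral_mono_ae
            refine (ae_restrict_iff' (hsm c).compl).mpr (ae_of_all _ fun ω hω => ?_)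
            exact mul_le_mul_left (not_lt.1 (by simpa [hs] using hω)) _
        _ = (c : ℝ≥0∞) * ∫⁻ ω, ENNReal.ofReal |Xs n ω - X ω| ∂(Q.restrict (s c)ᶜ) :=
            lintegral_const_mul' _ _ (ENNReal.natCast_ne_top c)
        _ ≤ (c : ℝ≥0∞) * ∫⁻ ω, ENNReal.ofReal |Xs n ω - X ω| ∂Q :=
            mul_le_mul_right (setLIntegral_le_lintegral _ _) _
    have hmul := ENNReal.Tendsto.const_mul (a := (c : ℝ≥0∞)) hQ0
      (Or.inr (ENNReal.natCast_ne_top c))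
    rw [mul_zero] at hmul
    exact squeeze0 hmul key


end AuxProof

/-- Proposition 2.1: "de-switching" the equivalent probability measure. -/
theorem statement0 (P : Measure Ω) [IsProbabilityMeasure P]
    (K S : Set (Ω → ℝ)) (hKconv : Convex ℝ K) (hKbdd : BddL1 P K)
    (hS : S.Nonempty) (hSmeas : ∀ X ∈ S, AEStronglyMeasurable X P) :
    List.TFAE
      [(∃ Q : Measure Ω, EquivProb P Q ∧
          ∀ (Xs : ℕ → Ω → ℝ) (X : Ω → ℝ), (∀ n, Xs n ∈ K) → X ∈ S →
            TendstoInMeasure P Xs atTop X →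
            Tendsto (fun n => ∫⁻ ω, ENNReal.ofReal |Xs n ω - X ω| ∂Q) atTop (nhds 0)),
       (∀ ε : ℝ, 0 < ε → ∃ A : Set Ω, MeasurableSet A ∧ 1 - ε < (P A).toReal ∧
          ∀ (Xs : ℕ → Ω → ℝ) (X : Ω → ℝ), (∀ n, Xs n ∈ K) → X ∈ S →
            TendstoInMeasure P Xs atTop X →
            Tendsto (fun n => ∫⁻ ω in A, ENNReal.ofReal |Xs n ω - X ω| ∂P) atTop (nhds 0)),
       (∀ A : Set Ω, MeasurableSet A → 0 < P A →
          ∃ B ⊆ A, MeasurableSet B ∧ 0 < P B ∧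
          ∀ (Xs : ℕ → Ω → ℝ) (X : Ω → ℝ), (∀ n, Xs n ∈ K) → X ∈ S →
            TendstoInMeasure P Xs atTop X →
            Tendsto (fun n => ∫⁻ ω in B, ENNReal.ofReal |Xs n ω - X ω| ∂P) atTop (nhds 0))] := by
  tfae_have 1 → 2 := one_to_two P hKbdd hSmeas
  tfae_have 2 → 3 := two_to_three P
  tfae_have 3 → 1 := three_to_one P hKbdd hSmeas
  tfae_finish

end Paper
end
end

section
/- Let (Ω,Σ,P) be a probability space, let K be a convex set of P-integrable random variables, and let S be a nonempty subset of K. Suppose the relative L^0(P)-topology on K is uniformly locally convex-solid on S. Then for every measurable set A with P(A) > 0 there exists a bounded nonnegative random variable Y, not P-a.s. zero, with Y = 0 a.s. on the complement of A, such that E_P[|X_n − X|·Y] → 0 for every sequence (X_n) in K that converges in P-probability to some X ∈ S. -/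
open MeasureTheory Filter Set ProbabilityTheory

noncomputable section

namespace Paper

variable {Ω : Type*} [MeasurableSpace Ω]

lemma min_one_subadd {x y z : ℝ} (hx : x ≤ y + z) (hy : 0 ≤ y) (hz : 0 ≤ z) :
    min x 1 ≤ min y 1 + min z 1 := by
  rcases le_total 1 y with h | h
  · have h1 : min y 1 = 1 := min_eq_right h
    have h2 := min_le_right x 1
    have h3 : (0:ℝ) ≤ min z 1 := le_min hz zero_le_one
    linarith
  · rcases le_total 1 z with h' | h'
    · have h1 : min z 1 = 1 := min_eq_right h'
      have h2 := min_le_right x 1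
      have h3 : (0:ℝ) ≤ min y 1 := le_min hy zero_le_one
      linarith
    · have h1 : min y 1 = y := min_eq_left h
      have h2 : min z 1 = z := min_eq_left h'
      have h3 := min_le_left x 1
      linarith

lemma min_abs_add (a b : ℝ) : min |a + b| 1 ≤ min |a| 1 + min |b| 1 :=
  min_one_subadd (abs_add_le a b) (abs_nonneg a) (abs_nonneg b)

lemma min_abs_sum {ι : Type*} (t : Finset ι) (f : ι → ℝ) :
    min |∑ i ∈ t, f i| 1 ≤ ∑ i ∈ t, min |f i| 1 := by
  classical
  induction t using Finset.induction_on with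
  | empty => simp
  | insert a s hnotmem ih =>
    rw [Finset.sum_insert hnotmem, Finset.sum_insert hnotmem]
    exact le_trans (min_abs_add _ _) (by linarith)

lemma min_mul_le {c z : ℝ} (hc : 1 ≤ c) (hz : 0 ≤ z) : min (c * z) 1 ≤ c * min z 1 := by
  rcases le_total z 1 with h | h
  · rw [min_eq_left h]
    exact min_le_left _ _
  · rw [min_eq_right h, mul_one]
    exact le_trans (min_le_right _ _) hc

lemma integrable_min_abs_one {P : Measure Ω} [IsFiniteMeasure P] {Z : Ω → ℝ}
    (h : AEStronglyMeasurable Z P) : Integrable (fun ω => min |Z ω| 1) P := by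
  have hm : AEStronglyMeasurable (fun ω => min |Z ω| 1) P :=
    ((measurable_abs.comp_aemeasurable h.aemeasurable).min aemeasurable_const).aestronglyMeasurable
  refine (integrable_const (1:ℝ)).mono' hm ?_
  filter_upwards with ω
  rw [Real.norm_eq_abs, abs_of_nonneg (le_min (abs_nonneg _) zero_le_one)]
  exact min_le_right _ _

lemma probDist_nonneg {P : Measure Ω} {X Y : Ω → ℝ} : 0 ≤ probDist P X Y :=
  integral_nonneg fun ω => le_min (abs_nonneg _) zero_le_one

lemma probDist_zero_eq {P : Measure Ω} {Z : Ω → ℝ} :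
    probDist P Z 0 = ∫ ω, min |Z ω| 1 ∂P := by
  simp [probDist]

lemma probDist_self {P : Measure Ω} {X : Ω → ℝ} : probDist P X X = 0 := by
  simp [probDist]

lemma tendsto_probDist {P : Measure Ω} [IsProbabilityMeasure P] {Xs : ℕ → Ω → ℝ} {X : Ω → ℝ}
    (hXs : ∀ n, AEStronglyMeasurable (Xs n) P) (hX : AEStronglyMeasurable X P)
    (h : TendstoInMeasure P Xs atTop X) :
    Tendsto (fun n => probDist P (Xs n) X) atTop (nhds 0) := by
  rw [tendsto_order]
  constructor
  · intro a ha
    filter_upwards with n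
    exact lt_of_lt_of_le ha probDist_nonneg
  · intro a ha
    have h2 := h (ENNReal.ofReal (a/2)) (ENNReal.ofReal_pos.2 (by linarith))
    have h3 : Tendsto (fun n => (P {ω | a/2 ≤ dist (Xs n ω) (X ω)}).toReal) atTop (nhds 0) := by
      have := (ENNReal.tendsto_toReal (by simp : (0:ENNReal) ≠ ⊤)).comp h2
      have hs : ∀ i, {x | ENNReal.ofReal (a/2) ≤ edist (Xs i x) (X x)}
          = {ω | a/2 ≤ dist (Xs i ω) (X ω)} := by
        intro i; ext x; simp only [mem_setOf_eq, edist_dist]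
        exact ENNReal.ofReal_le_ofReal_iff dist_nonneg
      exact Tendsto.congr (fun i => by simp only [Function.comp_apply, hs]) this
    have h4 : ∀ᶠ n in atTop, (P {ω | a/2 ≤ dist (Xs n ω) (X ω)}).toReal < a/2 :=
      h3.eventually_lt_const (by linarith)
    filter_upwards [h4] with n hn
    have hZ : AEStronglyMeasurable (fun ω => Xs n ω - X ω) P := (hXs n).sub hX
    set Z' : Ω → ℝ := hZ.mk _ with hZ'def
    have hZm : StronglyMeasurable Z' := hZ.stronglyMeasurable_mk
    have heq : (fun ω => Xs n ω - X ω) =ᵐ[P] Z' := hZ.ae_eq_mk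
    have hS : MeasurableSet {ω | a/2 ≤ |Z' ω|} :=
      measurableSet_le measurable_const hZm.measurable.abs
    have hset : P {ω | a/2 ≤ dist (Xs n ω) (X ω)} = P {ω | a/2 ≤ |Z' ω|} := by
      refine measure_congr (eventuallyEq_set.2 ?_)
      filter_upwards [heq] with ω hω
      simp only [Real.dist_eq, mem_setOf_eq, hω]
    have hpd : probDist P (Xs n) X = ∫ ω, min |Z' ω| 1 ∂P := by
      refine integral_congr_ae ?_
      filter_upwards [heq] with ω hω
      rw [← hω]
    have hbound : probDist P (Xs n) X ≤ a/2 + (P {ω | a/2 ≤ |Z' ω|}).toReal := by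
      rw [hpd]
      have hint1 : Integrable (fun ω => a/2 + ({ω | a/2 ≤ |Z' ω|}).indicator (fun _ => (1:ℝ)) ω) P :=
        (integrable_const _).add ((integrable_const 1).indicator hS)
      have hle : ∀ ω, min |Z' ω| 1 ≤ a/2 + ({ω | a/2 ≤ |Z' ω|}).indicator (fun _ => (1:ℝ)) ω := by
        intro ω
        by_cases hω : a/2 ≤ |Z' ω|
        · have h9 : ({ω | a/2 ≤ |Z' ω|}).indicator (fun _ => (1:ℝ)) ω = 1 :=
            Set.indicator_of_mem (by exact hω) _
          rw [h9]
          have := min_le_right |Z' ω| 1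
          linarith
        · have h9 : ({ω | a/2 ≤ |Z' ω|}).indicator (fun _ => (1:ℝ)) ω = 0 :=
            Set.indicator_of_notMem (by exact hω) _
          rw [h9]
          push_neg at hω
          have := min_le_left |Z' ω| 1
          linarith
      calc ∫ ω, min |Z' ω| 1 ∂P
          ≤ ∫ ω, (a/2 + ({ω | a/2 ≤ |Z' ω|}).indicator (fun _ => (1:ℝ)) ω) ∂P :=
            integral_mono (integrable_min_abs_one hZm.aestronglyMeasurable) hint1 hle
        _ = a/2 + (P {ω | a/2 ≤ |Z' ω|}).toReal := by
            rw [integral_add (integrable_const _) ((integrable_const 1).indicator hS),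
              integral_const, integral_indicator_const _ hS]
            simp [measure_univ]
            rfl
    rw [hset] at hn
    linarith

set_option maxHeartbeats 4000000 in
/-- Proposition 3.1 (Hahn–Banach type separation): under uniform local convex-solidity on `S`,
every set of positive measure supports a bounded nonnegative nonzero random variable `Y`
against which `|X_n - X|` integrates to zero along sequences converging in probability. -/
theorem statement4 (P : Measure Ω) [IsProbabilityMeasure P]
    (K S : Set (Ω → ℝ)) (hKconv : Convex ℝ K) (hKint : ∀ X ∈ K, Integrable X P)
    (hS : S.Nonempty) (hSsub : S ⊆ K)
    (hulcs : UnifLCS P K S) :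
    ∀ A : Set Ω, MeasurableSet A → 0 < P A →
      ∃ Y : Ω → ℝ, Measurable Y ∧ (∃ C : ℝ, ∀ ω, |Y ω| ≤ C) ∧ (∀ ω, 0 ≤ Y ω) ∧
        ¬ (Y =ᵐ[P] (fun _ => 0)) ∧ (∀ᵐ ω ∂P, ω ∉ A → Y ω = 0) ∧
        ∀ (Xs : ℕ → Ω → ℝ) (X : Ω → ℝ), (∀ n, Xs n ∈ K) → X ∈ S →
          TendstoInMeasure P Xs atTop X →
          Tendsto (fun n => ∫ ω, |Xs n ω - X ω| * Y ω ∂P) atTop (nhds 0) := by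
  intro A hA hPA
  classical
  obtain ⟨X₀, hX₀S⟩ := hS
  have hPAne : P A ≠ ⊤ := measure_ne_top P A
  set pA : ℝ := (P A).toReal with hpAdef
  have hpA : 0 < pA := ENNReal.toReal_pos hPA.ne' hPAne
  -- choose the family of convex solid sets
  have hch : ∀ j : ℕ, ∃ W : Set (Ω → ℝ),
      (∀ Z ∈ W, Integrable Z P) ∧ Convex ℝ W ∧ SolidSet P W ∧
      (∀ Z ∈ W, probDist P Z 0 < pA * (1/2)^(2*j+4)) ∧
      ∀ X ∈ S, ∃ δ : ℝ, 0 < δ ∧ ∀ Z ∈ K, probDist P Z X < δ → Z - X ∈ W := by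
    intro j
    exact hulcs _ (by positivity)
  choose W hWint hWconv hWsolid hWd hWball using hch
  have hW0 : ∀ j, (0 : Ω → ℝ) ∈ W j := by
    intro j
    obtain ⟨δ, hδ, hb⟩ := hWball j X₀ hX₀S
    have h0 := hb X₀ (hSsub hX₀S) (by rw [probDist_self]; exact hδ)
    rwa [sub_self] at h0
  -- integrability of the finite sums
  have hGint : ∀ (t : Finset ℕ) (Z : ℕ → Ω → ℝ), (∀ j ∈ t, Z j ∈ W j) →
      Integrable (fun ω => ∑ j ∈ t, (2:ℝ)^j * Z j ω) P := by
    intro t Z hZ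
    exact integrable_finset_sum t fun j hj => (hWint j (Z j) (hZ j hj)).const_mul _
  -- smallness in probability of the finite sums
  have hGd : ∀ (t : Finset ℕ) (Z : ℕ → Ω → ℝ), (∀ j ∈ t, Z j ∈ W j) →
      ∫ ω, min |∑ j ∈ t, (2:ℝ)^j * Z j ω| 1 ∂P ≤ pA/8 := by
    intro t Z hZ
    have hterm : ∀ j ∈ t, ∫ ω, min |(2:ℝ)^j * Z j ω| 1 ∂P ≤ pA * (1/2)^(j+4) := by
      intro j hj
      have hZj := hZ j hj
      have hZint := hWint j (Z j) hZj
      have h2pos : (0:ℝ) < 2^j := pow_pos two_pos j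
      have h1le : (1:ℝ) ≤ 2^j := one_le_pow₀ one_le_two
      have hptw : ∀ ω, min |(2:ℝ)^j * Z j ω| 1 ≤ 2^j * min |Z j ω| 1 := by
        intro ω
        rw [abs_mul, abs_of_pos h2pos]
        exact min_mul_le h1le (abs_nonneg _)
      have hd := hWd j (Z j) hZj
      rw [probDist_zero_eq] at hd
      calc ∫ ω, min |(2:ℝ)^j * Z j ω| 1 ∂P
          ≤ ∫ ω, 2^j * min |Z j ω| 1 ∂P :=
            integral_mono (integrable_min_abs_one (hZint.const_mul _).aestronglyMeasurable)
              ((integrable_min_abs_one hZint.aestronglyMeasurable).const_mul _) hptw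
        _ = 2^j * ∫ ω, min |Z j ω| 1 ∂P := integral_const_mul _ _
        _ ≤ 2^j * (pA * (1/2)^(2*j+4)) := by nlinarith
        _ = pA * (1/2)^(j+4) := by
            have h2 : ((1:ℝ)/2)^(2*j+4) = (1/2)^j * (1/2)^(j+4) := by
              rw [← pow_add]; congr 1; ring
            have h3 : (2:ℝ)^j * (1/2)^j = 1 := by
              rw [← mul_pow]; norm_num
            calc (2:ℝ)^j * (pA * (1/2)^(2*j+4))
                = ((2:ℝ)^j * (1/2)^j) * (pA * (1/2)^(j+4)) := by rw [h2]; ring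
              _ = pA * (1/2)^(j+4) := by rw [h3]; ring
    have hint2 : ∀ j ∈ t, Integrable (fun ω => min |(2:ℝ)^j * Z j ω| 1) P := fun j hj =>
      integrable_min_abs_one ((hWint j (Z j) (hZ j hj)).const_mul _).aestronglyMeasurable
    have h1 : ∫ ω, min |∑ j ∈ t, (2:ℝ)^j * Z j ω| 1 ∂P
        ≤ ∑ j ∈ t, ∫ ω, min |(2:ℝ)^j * Z j ω| 1 ∂P := by
      calc ∫ ω, min |∑ j ∈ t, (2:ℝ)^j * Z j ω| 1 ∂P
          ≤ ∫ ω, ∑ j ∈ t, min |(2:ℝ)^j * Z j ω| 1 ∂P :=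
            integral_mono (integrable_min_abs_one (hGint t Z hZ).aestronglyMeasurable)
              (integrable_finset_sum t hint2) (fun ω => min_abs_sum t _)
        _ = ∑ j ∈ t, ∫ ω, min |(2:ℝ)^j * Z j ω| 1 ∂P := integral_finset_sum t hint2
    have hs : Summable (fun j : ℕ => ((1:ℝ)/2)^(j+4)) := by
      refine (summable_geometric_two.mul_right (((1:ℝ)/2)^4)).congr fun j => ?_
      rw [← pow_add]
    have htsum : ∑' j : ℕ, ((1:ℝ)/2)^(j+4) = 1/8 := by
      have he : ∀ j : ℕ, ((1:ℝ)/2)^(j+4) = (1/2)^j * (1/16) := by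
        intro j; rw [pow_add]; norm_num
      rw [tsum_congr he, tsum_mul_right, tsum_geometric_two]
      norm_num
    have hle := Summable.sum_le_tsum t (fun j _ => by positivity) hs
    rw [htsum] at hle
    have h2 : ∑ j ∈ t, pA * ((1:ℝ)/2)^(j+4) ≤ pA/8 := by
      rw [← Finset.mul_sum]
      nlinarith
    exact le_trans (le_trans h1 (Finset.sum_le_sum hterm)) h2
  -- the indicator of A as an L¹ element
  set indA : Ω → ℝ := A.indicator (fun _ => 1) with hindAdef
  have hindA_sm : StronglyMeasurable indA := stronglyMeasurable_const.indicator hA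
  have hindA_bdd : ∀ ω, |indA ω| ≤ 1 := by
    intro ω
    by_cases h : ω ∈ A <;>
      simp [hindAdef, Set.indicator_of_mem, Set.indicator_of_notMem, h]
  have hindA_int : Integrable indA P := (integrable_const 1).indicator hA
  have hindA_mem1 : MemLp indA 1 P := memLp_one_iff_integrable.2 hindA_int
  set xA : Lp ℝ 1 P := hindA_mem1.toLp indA with hxAdef
  -- the convex set U₁ in L¹
  set U₁ : Set (Lp ℝ 1 P) := {u | ∃ t : Finset ℕ, ∃ Z : ℕ → Ω → ℝ,
      (∀ j ∈ t, Z j ∈ W j) ∧ ⇑u =ᵐ[P] fun ω => ∑ j ∈ t, (2:ℝ)^j * Z j ω} with hU₁def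
  have hU₁0 : (0 : Lp ℝ 1 P) ∈ U₁ := by
    refine ⟨∅, fun _ => 0, by simp, ?_⟩
    filter_upwards [Lp.coeFn_zero ℝ 1 P] with ω h
    simpa using h
  have hU₁conv : Convex ℝ U₁ := by
    intro u hu v hv a b ha hb hab
    obtain ⟨t, Z, hZ, hu⟩ := hu
    obtain ⟨t', Z', hZ', hv⟩ := hv
    refine ⟨t ∪ t', fun j ω => a * (if j ∈ t then Z j ω else 0) +
      b * (if j ∈ t' then Z' j ω else 0), ?_, ?_⟩
    · intro j hj
      have hZp : (fun ω => if j ∈ t then Z j ω else 0) ∈ W j := by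
        by_cases h : j ∈ t
        · simp only [if_pos h]; exact hZ j h
        · simp only [if_neg h]; exact hW0 j
      have hZp' : (fun ω => if j ∈ t' then Z' j ω else 0) ∈ W j := by
        by_cases h : j ∈ t'
        · simp only [if_pos h]; exact hZ' j h
        · simp only [if_neg h]; exact hW0 j
      exact hWconv j hZp hZp' ha hb hab
    · filter_upwards [Lp.coeFn_add (a • u) (b • v), Lp.coeFn_smul a u, Lp.coeFn_smul b v,
        hu, hv] with ω e1 e2 e3 e4 e5
      have hω : (⇑(a • u + b • v) : Ω → ℝ) ω = a * (⇑u ω) + b * (⇑v ω) := by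
        rw [e1]
        simp only [Pi.add_apply, e2, e3, Pi.smul_apply, smul_eq_mul]
      rw [hω, e4, e5]
      have hsum1 : ∑ j ∈ t ∪ t', (2:ℝ)^j * (if j ∈ t then Z j ω else 0)
          = ∑ j ∈ t, (2:ℝ)^j * Z j ω := by
        rw [Finset.sum_congr rfl (g := fun j => if j ∈ t then (2:ℝ)^j * Z j ω else 0)
          (fun j _ => by by_cases h : j ∈ t <;> simp [h])]
        rw [Finset.sum_ite_mem, Finset.union_inter_cancel_left]
      have hsum2 : ∑ j ∈ t ∪ t', (2:ℝ)^j * (if j ∈ t' then Z' j ω else 0)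
          = ∑ j ∈ t', (2:ℝ)^j * Z' j ω := by
        rw [Finset.sum_congr rfl (g := fun j => if j ∈ t' then (2:ℝ)^j * Z' j ω else 0)
          (fun j _ => by by_cases h : j ∈ t' <;> simp [h])]
        rw [Finset.sum_ite_mem, Finset.union_inter_cancel_right]
      calc a * ∑ j ∈ t, (2:ℝ)^j * Z j ω + b * ∑ j ∈ t', (2:ℝ)^j * Z' j ω
          = a * ∑ j ∈ t ∪ t', (2:ℝ)^j * (if j ∈ t then Z j ω else 0)
            + b * ∑ j ∈ t ∪ t', (2:ℝ)^j * (if j ∈ t' then Z' j ω else 0) := by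
            rw [hsum1, hsum2]
        _ = ∑ j ∈ t ∪ t', (2:ℝ)^j * (a * (if j ∈ t then Z j ω else 0)
            + b * (if j ∈ t' then Z' j ω else 0)) := by
            rw [Finset.mul_sum, Finset.mul_sum, ← Finset.sum_add_distrib]
            exact Finset.sum_congr rfl fun j _ => by ring
  -- distance estimate
  have hdist : ∀ u ∈ U₁, pA * (7/8) ≤ ‖xA - u‖ := by
    intro u hu
    obtain ⟨t, Z, hZ, hu⟩ := hu
    set G : Ω → ℝ := fun ω => ∑ j ∈ t, (2:ℝ)^j * Z j ω with hGdef
    have hGint' : Integrable G P := hGint t Z hZ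
    have hminint := integrable_min_abs_one hGint'.aestronglyMeasurable
    have hco : ⇑(xA - u) =ᵐ[P] fun ω => indA ω - G ω := by
      filter_upwards [Lp.coeFn_sub xA u, hindA_mem1.coeFn_toLp, hu] with ω e1 e2 e3
      rw [e1, Pi.sub_apply, e2, e3]
    have hnorm : ‖xA - u‖ = ∫ ω, |indA ω - G ω| ∂P := by
      rw [L1.norm_eq_integral_norm]
      refine integral_congr_ae ?_
      filter_upwards [hco] with ω e
      rw [e, Real.norm_eq_abs]
    have hmono : ∀ ω, A.indicator (fun ω' => 1 - min |G ω'| 1) ω ≤ |indA ω - G ω| := by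
      intro ω
      by_cases h : ω ∈ A
      · rw [Set.indicator_of_mem h, hindAdef, Set.indicator_of_mem h]
        have h2 : 1 - |1 - G ω| ≤ min |G ω| 1 := by
          refine le_min ?_ (by linarith [abs_nonneg (1 - G ω)])
          have := abs_sub_abs_le_abs_sub (1:ℝ) (G ω)
          rw [abs_one] at this
          linarith
        linarith
      · rw [Set.indicator_of_notMem h]
        exact abs_nonneg _
    have hub : Integrable (A.indicator (fun ω => 1 - min |G ω| 1)) P := by
      refine (integrable_const (1:ℝ)).mono'
        ((aestronglyMeasurable_const.sub hminint.aestronglyMeasurable).indicator hA) ?_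
      filter_upwards with ω
      by_cases h : ω ∈ A
      · rw [Set.indicator_of_mem h, Real.norm_eq_abs, abs_le]
        constructor
        · have := min_le_right |G ω| 1
          linarith
        · have : (0:ℝ) ≤ min |G ω| 1 := le_min (abs_nonneg _) zero_le_one
          linarith
      · rw [Set.indicator_of_notMem h]
        simp
    have hI1 : ∫ ω, A.indicator (fun ω' => 1 - min |G ω'| 1) ω ∂P
        = pA - ∫ ω in A, min |G ω| 1 ∂P := by
      rw [integral_indicator hA,
        integral_sub (integrableOn_const (C := (1:ℝ)) (measure_ne_top P A)) hminint.integrableOn,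
        setIntegral_const]
      simp [hpAdef, measureReal_def]
    have hI2 : ∫ ω in A, min |G ω| 1 ∂P ≤ ∫ ω, min |G ω| 1 ∂P :=
      setIntegral_le_integral hminint
        (Filter.Eventually.of_forall fun ω => le_min (abs_nonneg _) zero_le_one)
    have hI3 := hGd t Z hZ
    calc pA * (7/8) = pA - pA/8 := by ring
      _ ≤ pA - ∫ ω in A, min |G ω| 1 ∂P := by linarith
      _ = ∫ ω, A.indicator (fun ω' => 1 - min |G ω'| 1) ω ∂P := hI1.symm
      _ ≤ ∫ ω, |indA ω - G ω| ∂P := integral_mono hub (hindA_int.sub hGint').abs hmono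
      _ = ‖xA - u‖ := hnorm.symm
  have hxnot : xA ∉ closure U₁ := by
    intro hx
    obtain ⟨u, huU, hlt⟩ := Metric.mem_closure_iff.1 hx (pA/2) (by linarith)
    have hd := hdist u huU
    rw [dist_eq_norm] at hlt
    linarith
  -- Hahn-Banach separation
  obtain ⟨f, c, hfc, hcx⟩ :=
    geometric_hahn_banach_closed_point hU₁conv.closure isClosed_closure hxnot
  have hfU : ∀ u ∈ U₁, f u < c := fun u hu => hfc u (subset_closure hu)
  have hcpos : 0 < c := by
    have := hfU 0 hU₁0
    simpa using this
  -- the L² Riesz representation of f on bounded functions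
  have hmem21 : ∀ φ : Lp ℝ 2 P, MemLp (⇑φ) 1 P := fun φ =>
    (Lp.memLp φ).mono_exponent (by norm_num)
  have hnormle : ∀ φ : Lp ℝ 2 P, ‖(hmem21 φ).toLp ⇑φ‖ ≤ ‖φ‖ := by
    intro φ
    rw [Lp.norm_toLp ⇑φ (hmem21 φ), Lp.norm_def]
    refine ENNReal.toReal_mono (Lp.eLpNorm_ne_top φ) ?_
    exact eLpNorm_le_eLpNorm_of_exponent_le (by norm_num) (Lp.aestronglyMeasurable φ)
  set glin : Lp ℝ 2 P →ₗ[ℝ] ℝ :=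
    { toFun := fun φ => f ((hmem21 φ).toLp ⇑φ)
      map_add' := by
        intro φ φ'
        have h : (hmem21 (φ + φ')).toLp ⇑(φ + φ')
            = (hmem21 φ).toLp ⇑φ + (hmem21 φ').toLp ⇑φ' := by
          rw [MemLp.toLp_congr (hmem21 (φ + φ')) ((hmem21 φ).add (hmem21 φ'))
            (Lp.coeFn_add φ φ'), MemLp.toLp_add]
        simp only [h, map_add]
      map_smul' := by
        intro r φ
        have h : (hmem21 (r • φ)).toLp ⇑(r • φ) = r • ((hmem21 φ).toLp ⇑φ) := by
          rw [MemLp.toLp_congr (hmem21 (r • φ)) ((hmem21 φ).const_smul r)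
            (Lp.coeFn_smul r φ), MemLp.toLp_const_smul]
        simp only [h, _root_.map_smul, RingHom.id_apply, smul_eq_mul] }
    with hglindef
  set g : Lp ℝ 2 P →L[ℝ] ℝ := glin.mkContinuous ‖f‖ (by
    intro φ
    refine le_trans (f.le_opNorm _) ?_
    exact mul_le_mul_of_nonneg_left (hnormle φ) (norm_nonneg f)) with hgdef
  set ψ : Lp ℝ 2 P := (InnerProductSpace.toDual ℝ (Lp ℝ 2 P)).symm g with hψdef
  have hψrep : ∀ φ : Lp ℝ 2 P, ∫ ω, (⇑ψ ω) * (⇑φ ω) ∂P = f ((hmem21 φ).toLp ⇑φ) := by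
    intro φ
    have h1 : (inner ℝ ψ φ : ℝ) = g φ := InnerProductSpace.toDual_symm_apply
    have h2 : (inner ℝ ψ φ : ℝ) = ∫ ω, (⇑ψ ω) * (⇑φ ω) ∂P := by
      rw [L2.inner_def]
      refine integral_congr_ae (Filter.Eventually.of_forall fun ω => ?_)
      simp [RCLike.inner_apply, starRingEnd_apply, star_trivial, mul_comm]
    rw [← h2, h1]
    rfl
  -- measurable representative of ψ
  have ψae := Lp.aestronglyMeasurable ψ
  set ψ₀ : Ω → ℝ := ψae.mk ⇑ψ with hψ₀def
  have hψ₀m : StronglyMeasurable ψ₀ := ψae.stronglyMeasurable_mk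
  have hψ₀ae : ⇑ψ =ᵐ[P] ψ₀ := ψae.ae_eq_mk
  have hψ₀mem2 : MemLp ψ₀ 2 P := (Lp.memLp ψ).ae_eq hψ₀ae
  have hψ₀int : Integrable ψ₀ P :=
    memLp_one_iff_integrable.1 (hψ₀mem2.mono_exponent (by norm_num))
  set C : ℝ := ‖f‖ with hCdef
  have hCnn : (0:ℝ) ≤ C := norm_nonneg _
  -- ψ₀ is a.e. bounded by C
  have hBnull : ∀ n : ℕ, P {ω | C + 1/((n:ℝ)+1) ≤ |ψ₀ ω|} = 0 := by
    intro n
    set δ : ℝ := 1/((n:ℝ)+1) with hδdef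
    have hδ : 0 < δ := by positivity
    set B : Set Ω := {ω | C + δ ≤ |ψ₀ ω|} with hBdef
    have hB : MeasurableSet B := measurableSet_le measurable_const hψ₀m.measurable.abs
    set φf : Ω → ℝ := B.indicator ψ₀ with hφdef
    have hφmem2 : MemLp φf 2 P := hψ₀mem2.indicator hB
    set φ : Lp ℝ 2 P := hφmem2.toLp φf with hφLdef
    have hrep := hψrep φ
    have hφint : Integrable φf P := hψ₀int.indicator hB
    have hL : ∫ ω, (⇑ψ ω) * (⇑φ ω) ∂P = ∫ ω in B, ψ₀ ω ^ 2 ∂P := by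
      rw [← integral_indicator hB]
      refine integral_congr_ae ?_
      filter_upwards [hψ₀ae, hφmem2.coeFn_toLp] with ω e1 e2
      rw [e1, e2]
      by_cases h : ω ∈ B
      · rw [hφdef, Set.indicator_of_mem h, Set.indicator_of_mem h]
        ring
      · rw [hφdef, Set.indicator_of_notMem h, Set.indicator_of_notMem h, mul_zero]
    have hnv : ‖(hmem21 φ).toLp ⇑φ‖ = ∫ ω in B, |ψ₀ ω| ∂P := by
      rw [L1.norm_eq_integral_norm, ← integral_indicator hB]
      refine integral_congr_ae ?_
      filter_upwards [(hmem21 φ).coeFn_toLp, hφmem2.coeFn_toLp] with ω e1 e2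
      rw [e1, e2, Real.norm_eq_abs]
      by_cases h : ω ∈ B
      · rw [hφdef, Set.indicator_of_mem h, Set.indicator_of_mem h]
      · rw [hφdef, Set.indicator_of_notMem h, Set.indicator_of_notMem h, abs_zero]
    have hfb : f ((hmem21 φ).toLp ⇑φ) ≤ C * ∫ ω in B, |ψ₀ ω| ∂P := by
      calc f ((hmem21 φ).toLp ⇑φ) ≤ ‖f ((hmem21 φ).toLp ⇑φ)‖ := le_abs_self _
        _ ≤ ‖f‖ * ‖(hmem21 φ).toLp ⇑φ‖ := f.le_opNorm _
        _ = C * ∫ ω in B, |ψ₀ ω| ∂P := by rw [hnv]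
    have hsq_int : Integrable (fun ω => ψ₀ ω ^ 2) P := hψ₀mem2.integrable_sq
    have hlow : (C + δ) * ∫ ω in B, |ψ₀ ω| ∂P ≤ ∫ ω in B, ψ₀ ω ^ 2 ∂P := by
      rw [← integral_const_mul]
      refine setIntegral_mono_on ((hψ₀int.abs.const_mul _).integrableOn)
        hsq_int.integrableOn hB (fun ω hω => ?_)
      have hω' : C + δ ≤ |ψ₀ ω| := hω
      nlinarith [sq_abs (ψ₀ ω), abs_nonneg (ψ₀ ω)]
    have hIpos : 0 ≤ ∫ ω in B, |ψ₀ ω| ∂P :=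
      setIntegral_nonneg hB fun ω _ => abs_nonneg _
    have hIzero : ∫ ω in B, |ψ₀ ω| ∂P = 0 := by
      rw [hL] at hrep
      nlinarith
    have h9 : (C + δ) * (P B).toReal ≤ ∫ ω in B, |ψ₀ ω| ∂P := by
      have h10 : ∫ ω in B, (C + δ) ∂P ≤ ∫ ω in B, |ψ₀ ω| ∂P :=
        setIntegral_mono_on (integrableOn_const (C := C + δ) (measure_ne_top P B))
          hψ₀int.abs.integrableOn hB (fun ω hω => hω)
      rwa [setIntegral_const, smul_eq_mul, mul_comm] at h10
    have hPB : (P B).toReal = 0 := by nlinarith [ENNReal.toReal_nonneg (a := P B)]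
    have := (ENNReal.toReal_eq_zero_iff _).1 hPB
    rcases this with h | h
    · exact h
    · exact absurd h (measure_ne_top P B)
  have hψbdd : ∀ᵐ ω ∂P, |ψ₀ ω| ≤ C := by
    rw [ae_iff]
    refine measure_mono_null ?_ (measure_iUnion_null fun n => hBnull n)
    intro ω hω
    simp only [mem_setOf_eq, not_le] at hω
    obtain ⟨n, hn⟩ := exists_nat_one_div_lt (by linarith : (0:ℝ) < |ψ₀ ω| - C)
    refine mem_iUnion.2 ⟨n, ?_⟩
    simp only [mem_setOf_eq]
    linarith
  -- key estimate on each W j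
  have hWkey : ∀ j : ℕ, ∀ Z ∈ W j, ∫ ω, |Z ω| * |ψ₀ ω| ∂P ≤ c / 2^j := by
    intro j Z hZj
    have hZint := hWint j Z hZj
    have hZaesm := hZint.aestronglyMeasurable
    set s : Ω → ℝ := fun ω => if 0 ≤ ψ₀ ω then 1 else -1 with hsdef
    have hsm : Measurable s :=
      Measurable.ite (measurableSet_le measurable_const hψ₀m.measurable) measurable_const
        measurable_const
    have hs1 : ∀ ω, |s ω| = 1 := by
      intro ω
      by_cases h : 0 ≤ ψ₀ ω <;> simp [hsdef, h]
    have hsψ : ∀ ω, s ω * ψ₀ ω = |ψ₀ ω| := by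
      intro ω
      by_cases h : 0 ≤ ψ₀ ω
      · simp [hsdef, h, abs_of_nonneg h]
      · simp only [hsdef, if_neg h]
        rw [abs_of_neg (lt_of_not_ge h)]
        ring
    have h2jpos : (0:ℝ) < 2^j := pow_pos two_pos j
    have hstep : ∀ m : ℕ, ∫ ω, min |Z ω| m * |ψ₀ ω| ∂P ≤ c / 2^j := by
      intro m
      set Zm : Ω → ℝ := fun ω => min |Z ω| m * s ω with hZmdef
      have hZm_aesm : AEStronglyMeasurable Zm P :=
        (((measurable_abs.comp_aemeasurable hZaesm.aemeasurable).min aemeasurable_const).mul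
          hsm.aemeasurable).aestronglyMeasurable
      have hZm_abs : ∀ ω, |Zm ω| = min |Z ω| m := by
        intro ω
        rw [hZmdef]
        simp only
        rw [abs_mul, hs1, mul_one,
          abs_of_nonneg (le_min (abs_nonneg _) (Nat.cast_nonneg m))]
      have hZmW : Zm ∈ W j :=
        hWsolid j Z hZj Zm hZm_aesm
          (Filter.Eventually.of_forall fun ω => by rw [hZm_abs]; exact min_le_left _ _)
      have hZm_bdd : ∀ ω, |Zm ω| ≤ (m:ℝ) := fun ω => by
        rw [hZm_abs]; exact min_le_right _ _
      have hZm_int : Integrable Zm P :=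
        (integrable_const (m:ℝ)).mono' hZm_aesm
          (Filter.Eventually.of_forall fun ω => by rw [Real.norm_eq_abs]; exact hZm_bdd ω)
      set Fm : Ω → ℝ := fun ω => (2:ℝ)^j * Zm ω with hFmdef
      have hFm_mem2 : MemLp Fm 2 P := by
        refine (memLp_top_of_bound (hZm_int.aestronglyMeasurable.const_mul _)
          ((2:ℝ)^j * m) (Filter.Eventually.of_forall fun ω => ?_)).mono_exponent le_top
        rw [Real.norm_eq_abs, abs_mul, abs_of_pos h2jpos]
        exact mul_le_mul_of_nonneg_left (hZm_bdd ω) (le_of_lt h2jpos)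
      set φ : Lp ℝ 2 P := hFm_mem2.toLp Fm with hφLdef
      have hUel : ((hmem21 φ).toLp ⇑φ) ∈ U₁ := by
        refine ⟨{j}, fun _ => Zm, fun j' hj' => ?_, ?_⟩
        · have : j' = j := Finset.mem_singleton.1 hj'
          rw [this] at *
          exact hZmW
        · filter_upwards [(hmem21 φ).coeFn_toLp, hFm_mem2.coeFn_toLp] with ω e1 e2
          rw [e1, e2]
          simp [hFmdef]
      have hflt : f ((hmem21 φ).toLp ⇑φ) < c := hfU _ hUel
      have hrep := hψrep φ
      have hcomp : ∫ ω, (⇑ψ ω) * (⇑φ ω) ∂P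
          = (2:ℝ)^j * ∫ ω, min |Z ω| m * |ψ₀ ω| ∂P := by
        rw [← integral_const_mul]
        refine integral_congr_ae ?_
        filter_upwards [hψ₀ae, hFm_mem2.coeFn_toLp] with ω e1 e2
        rw [e1, e2]
        calc ψ₀ ω * Fm ω = (2:ℝ)^j * (min |Z ω| m * (s ω * ψ₀ ω)) := by
              rw [hFmdef]; simp only [hZmdef]; ring
          _ = (2:ℝ)^j * (min |Z ω| m * |ψ₀ ω|) := by rw [hsψ]
      have hlt : (2:ℝ)^j * ∫ ω, min |Z ω| m * |ψ₀ ω| ∂P < c := by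
        rw [← hcomp, hrep]
        exact hflt
      rw [le_div_iff₀ h2jpos]
      nlinarith
    have hlim : Tendsto (fun m : ℕ => ∫ ω, min |Z ω| m * |ψ₀ ω| ∂P) atTop
        (nhds (∫ ω, |Z ω| * |ψ₀ ω| ∂P)) := by
      refine tendsto_integral_of_dominated_convergence (fun ω => C * |Z ω|) ?_ ?_ ?_ ?_
      · intro m
        exact (((measurable_abs.comp_aemeasurable hZaesm.aemeasurable).min
          aemeasurable_const).mul hψ₀m.measurable.abs.aemeasurable).aestronglyMeasurable
      · exact hZint.abs.const_mul C
      · intro m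
        filter_upwards [hψbdd] with ω hb
        have h0 : 0 ≤ min |Z ω| m := le_min (abs_nonneg _) (Nat.cast_nonneg m)
        rw [Real.norm_eq_abs, abs_of_nonneg (mul_nonneg h0 (abs_nonneg _))]
        calc min |Z ω| m * |ψ₀ ω| ≤ |Z ω| * |ψ₀ ω| :=
              mul_le_mul_of_nonneg_right (min_le_left _ _) (abs_nonneg _)
          _ ≤ |Z ω| * C := mul_le_mul_of_nonneg_left hb (abs_nonneg _)
          _ = C * |Z ω| := mul_comm _ _
      · filter_upwards with ω
        have hev : (fun m : ℕ => min |Z ω| ↑m * |ψ₀ ω|)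
            =ᶠ[atTop] (fun _ => |Z ω| * |ψ₀ ω|) := by
          filter_upwards [eventually_ge_atTop ⌈|Z ω|⌉₊] with m hm
          rw [min_eq_left (le_trans (Nat.le_ceil _) (Nat.cast_le.2 hm))]
        exact Tendsto.congr' hev.symm tendsto_const_nhds
    exact le_of_tendsto hlim (Filter.Eventually.of_forall hstep)
  -- value of f at xA
  have hfxA : f xA = ∫ ω in A, ψ₀ ω ∂P := by
    have hmem2 : MemLp indA 2 P :=
      (memLp_top_of_bound hindA_sm.aestronglyMeasurable 1
        (Filter.Eventually.of_forall fun ω => by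
          rw [Real.norm_eq_abs]; exact hindA_bdd ω)).mono_exponent le_top
    set φ : Lp ℝ 2 P := hmem2.toLp indA with hφLdef
    have h1 : (hmem21 φ).toLp ⇑φ = xA :=
      MemLp.toLp_congr (hmem21 φ) hindA_mem1 hmem2.coeFn_toLp
    have hrep := hψrep φ
    rw [h1] at hrep
    rw [← hrep, ← integral_indicator hA]
    refine integral_congr_ae ?_
    filter_upwards [hψ₀ae, hmem2.coeFn_toLp] with ω e1 e2
    rw [e1, e2]
    by_cases h : ω ∈ A
    · rw [hindAdef, Set.indicator_of_mem h, Set.indicator_of_mem h, mul_one]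
    · rw [hindAdef, Set.indicator_of_notMem h, Set.indicator_of_notMem h, mul_zero]
  -- the random variable Y
  set Y : Ω → ℝ := A.indicator (fun ω => min |ψ₀ ω| C) with hYdef
  have hYnn : ∀ ω, 0 ≤ Y ω := by
    intro ω
    by_cases h : ω ∈ A
    · rw [hYdef, Set.indicator_of_mem h]
      exact le_min (abs_nonneg _) hCnn
    · rw [hYdef, Set.indicator_of_notMem h]
  have hYbd : ∀ ω, |Y ω| ≤ C := by
    intro ω
    rw [abs_of_nonneg (hYnn ω)]
    by_cases h : ω ∈ A
    · rw [hYdef, Set.indicator_of_mem h]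
      exact min_le_right _ _
    · rw [hYdef, Set.indicator_of_notMem h]
      exact hCnn
  have hYmeas : Measurable Y :=
    (hψ₀m.measurable.abs.min measurable_const).indicator hA
  have hYle : ∀ ω, Y ω ≤ |ψ₀ ω| := by
    intro ω
    by_cases h : ω ∈ A
    · rw [hYdef, Set.indicator_of_mem h]
      exact min_le_left _ _
    · rw [hYdef, Set.indicator_of_notMem h]
      exact abs_nonneg _
  refine ⟨Y, hYmeas, ⟨C, hYbd⟩, hYnn, ?_, ?_, ?_⟩
  · -- not a.e. zero
    intro h0
    have hYint : Integrable Y P :=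
      (integrable_const C).mono' hYmeas.stronglyMeasurable.aestronglyMeasurable
        (Filter.Eventually.of_forall fun ω => by rw [Real.norm_eq_abs]; exact hYbd ω)
    have h1 : ∫ ω, Y ω ∂P = 0 := by
      rw [integral_congr_ae h0, integral_zero]
    have h2 : ∫ ω in A, ψ₀ ω ∂P ≤ ∫ ω, Y ω ∂P := by
      rw [hYdef, integral_indicator hA]
      refine setIntegral_mono_ae hψ₀int.integrableOn
        ((integrable_const C).mono' (hψ₀m.measurable.abs.min measurable_const).aestronglyMeasurable
          (Filter.Eventually.of_forall fun ω => by
            rw [Real.norm_eq_abs, abs_of_nonneg (le_min (abs_nonneg _) hCnn)]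
            exact min_le_right _ _)).integrableOn ?_
      filter_upwards [hψbdd] with ω hb
      exact le_min (le_abs_self _) (le_trans (le_abs_self _) hb)
    rw [hfxA] at hcx
    linarith
  · -- vanishes off A
    filter_upwards with ω h
    rw [hYdef, Set.indicator_of_notMem h]
  · -- the convergence statement
    intro Xs X hXsK hXS htim
    have hXint : Integrable X P := hKint X (hSsub hXS)
    have hXs_int : ∀ n, Integrable (Xs n) P := fun n => hKint _ (hXsK n)
    have hpd := tendsto_probDist (fun n => (hXs_int n).aestronglyMeasurable)
      hXint.aestronglyMeasurable htim
    rw [tendsto_order]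
    constructor
    · intro a ha
      filter_upwards with n
      exact lt_of_lt_of_le ha
        (integral_nonneg fun ω => mul_nonneg (abs_nonneg _) (hYnn ω))
    · intro a ha
      obtain ⟨j, hj⟩ := exists_pow_lt_of_lt_one (div_pos ha hcpos)
        (by norm_num : (1:ℝ)/2 < 1)
      have hja : c / 2^j < a := by
        have h1 : c / 2^j = c * ((1:ℝ)/2)^j := by
          rw [one_div, inv_pow]
          ring
        have h2 : c * ((1:ℝ)/2)^j < c * (a / c) := mul_lt_mul_of_pos_left hj hcpos
        rw [mul_div_cancel₀ a hcpos.ne'] at h2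
        linarith
      obtain ⟨δ, hδ, hball⟩ := hWball j X hXS
      filter_upwards [hpd.eventually_lt_const hδ] with n hn
      have hZW : (Xs n - X) ∈ W j := hball (Xs n) (hXsK n) hn
      have hZn_int : Integrable (fun ω => Xs n ω - X ω) P := (hXs_int n).sub hXint
      have hkey := hWkey j (Xs n - X) hZW
      have hbd : ∫ ω, |Xs n ω - X ω| * Y ω ∂P ≤ ∫ ω, |(Xs n - X) ω| * |ψ₀ ω| ∂P := by
        refine integral_mono_ae ?_ ?_ ?_
        · refine (hZn_int.abs.const_mul C).mono'
            (hZn_int.abs.aestronglyMeasurable.mul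
              hYmeas.stronglyMeasurable.aestronglyMeasurable) ?_
          filter_upwards with ω
          rw [Real.norm_eq_abs, abs_of_nonneg (mul_nonneg (abs_nonneg _) (hYnn ω))]
          calc |Xs n ω - X ω| * Y ω ≤ |Xs n ω - X ω| * C :=
                mul_le_mul_of_nonneg_left (le_trans (le_abs_self _) (hYbd ω)) (abs_nonneg _)
            _ = C * |Xs n ω - X ω| := mul_comm _ _
        · refine (hZn_int.abs.const_mul C).mono'
            (hZn_int.abs.aestronglyMeasurable.mul hψ₀m.measurable.abs.aestronglyMeasurable) ?_
          filter_upwards [hψbdd] with ω hb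
          rw [Real.norm_eq_abs, abs_of_nonneg (mul_nonneg (abs_nonneg _) (abs_nonneg _))]
          calc |(Xs n - X) ω| * |ψ₀ ω| ≤ |(Xs n - X) ω| * C :=
                mul_le_mul_of_nonneg_left hb (abs_nonneg _)
            _ = C * |(Xs n - X) ω| := mul_comm _ _
          -- note |(Xs n - X) ω| = |Xs n ω - X ω|
        · refine Filter.Eventually.of_forall fun ω => ?_
          simp only [Pi.sub_apply]
          exact mul_le_mul_of_nonneg_left (hYle ω) (abs_nonneg _)
      calc ∫ ω, |Xs n ω - X ω| * Y ω ∂P ≤ ∫ ω, |(Xs n - X) ω| * |ψ₀ ω| ∂P := hbd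
        _ ≤ c / 2^j := hkey
        _ < a := hja

end Paper
end
end

section
/- Let X be a topological vector space over ℝ and let A ⊆ X be a convex set with A = −A. Then the relative topology on A is locally convex at every point of A if and only if it is locally convex at 0. Here the relative topology on A is said to be locally convex at a point x ∈ A if for every neighborhood V of 0 in X there exist a neighborhood U of 0 in X and a convex set C ⊆ X such that (x + U) ∩ A ⊆ C ⊆ (x + V) ∩ A. -/
open MeasureTheory Filter Set ProbabilityTheory

noncomputable section

namespace Paper

variable {Ω : Type*} [MeasurableSpace Ω]

/-- Lemma 4.8: for a convex symmetric subset `A` of a topological vector space, the relative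
topology on `A` is locally convex everywhere iff it is locally convex at `0`. -/
theorem statement15 {E : Type*} [AddCommGroup E] [Module ℝ E] [TopologicalSpace E]
    [IsTopologicalAddGroup E] [ContinuousSMul ℝ E]
    (A : Set E) (hA : Convex ℝ A) (hsymm : A = -A) :
    (∀ x ∈ A, LocConvexAtTVS A x) ↔ LocConvexAtTVS A 0 := by
  constructor
  · intro h
    by_cases hne : A.Nonempty
    · obtain ⟨a, ha⟩ := hne
      have hna : -a ∈ A := by
        have : a ∈ -A := hsymm ▸ ha
        simpa using this
      have h0 : (0 : E) ∈ A := by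
        have := hA ha hna (by norm_num : (0:ℝ) ≤ 1/2) (by norm_num : (0:ℝ) ≤ 1/2)
          (by norm_num)
        simpa using this
      exact h 0 h0
    · rw [Set.not_nonempty_iff_eq_empty] at hne
      intro V hV
      exact ⟨V, hV, ∅, convex_empty, by simp [hne], by simp⟩
  · intro h0 x hx V hV
    have hnx : -x ∈ A := by
      have : x ∈ -A := hsymm ▸ hx
      simpa using this
    -- V' = preimage of V under doubling
    have hdbl : Continuous (fun z : E => (2:ℝ) • z) := continuous_const_smul _
    have hhalf : Continuous (fun z : E => (2:ℝ)⁻¹ • z) := continuous_const_smul _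
    have hV' : (fun z : E => (2:ℝ) • z) ⁻¹' V ∈ nhds (0 : E) := by
      have := (hdbl.tendsto 0) (by simpa using hV)
      exact this
    obtain ⟨U₀, hU₀, C₀, hC₀conv, hsub1, hsub2⟩ := h0 _ hV'
    refine ⟨(fun z : E => (2:ℝ)⁻¹ • z) ⁻¹' U₀,
      by exact (hhalf.tendsto 0) (by simpa using hU₀),
      ((fun c : E => x + (2:ℝ) • c) '' C₀) ∩ A, ?_, ?_, ?_⟩
    · refine Convex.inter ?_ hA
      have h1 : Convex ℝ ((fun c : E => (2:ℝ) • c) '' C₀) := by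
        rw [Set.image_smul]; exact hC₀conv.smul 2
      have h2 := h1.translate x
      rwa [Set.image_image] at h2
    · rintro y ⟨⟨u, hu, rfl⟩, hyA⟩
      set z := (2:ℝ)⁻¹ • u with hz
      have hzA : z ∈ A := by
        have := hA hyA hnx (by norm_num : (0:ℝ) ≤ 1/2) (by norm_num : (0:ℝ) ≤ 1/2)
          (by norm_num)
        have heq : (1/2 : ℝ) • (x + u) + (1/2 : ℝ) • (-x) = z := by
          rw [hz]; rw [smul_add, smul_neg]
          rw [show ((2:ℝ)⁻¹ : ℝ) = 1/2 by norm_num]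
          abel
        rwa [heq] at this
      have hzC₀ : z ∈ C₀ := by
        apply hsub1
        exact ⟨⟨z, hu, by simp⟩, hzA⟩
      refine ⟨⟨z, hzC₀, ?_⟩, hyA⟩
      show x + (2:ℝ) • ((2:ℝ)⁻¹ • u) = x + u
      rw [smul_smul]
      norm_num
    · rintro c ⟨⟨c₀, hc₀, rfl⟩, hcA⟩
      have := hsub2 hc₀
      obtain ⟨⟨v, hv, hveq⟩, -⟩ := this
      simp only [zero_add] at hveq
      subst hveq
      exact ⟨⟨(2:ℝ) • v, hv, rfl⟩, hcA⟩

end Paper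
end
end

section
/- Let (Ω,Σ,P) be a probability space and let (R_k)_{k≥1} be a sequence of P-integrable random variables with sup_k E_P[|R_k|] < ∞, such that for every sequence (V_m) with V_m in the convex hull of {R_k : k ≥ m} ∪ {−R_k : k ≥ m}, (V_m) converges to 0 in P-probability. Let B be the closed unit ball of ℓ¹, i.e., B = {(a_k) : Σ_k |a_k| ≤ 1}, equipped with the topology of coordinatewise convergence, and define T : B → L^0(P) by T((a_k)) = Σ_{k=1}^∞ a_k R_k (the series converging in L^1(P)). Then T is continuous from B to the space of random variables with the metric d(X,Y) = E_P[min(|X−Y|,1)] of convergence in P-probability, and the image T(B) is a compact subset of this metric space. -/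
open MeasureTheory Filter Set ProbabilityTheory

noncomputable section

namespace Paper

variable {Ω : Type*} [MeasurableSpace Ω]

section AuxPaper

open scoped ENNReal NNReal

variable (P : Measure Ω) [IsProbabilityMeasure P]

omit [IsProbabilityMeasure P] in
lemma aux_min_abs_nonneg (x : ℝ) : 0 ≤ min |x| 1 := le_min (abs_nonneg _) one_pos.le

lemma aux_integrable_min_abs {f : Ω → ℝ} (hf : AEStronglyMeasurable f P) :
    Integrable (fun ω => min |f ω| 1) P := by
  refine Integrable.mono' (integrable_const 1) ?_ ?_
  · exact ((continuous_abs.min continuous_const).comp_aestronglyMeasurable hf :)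
  · filter_upwards with ω
    rw [Real.norm_eq_abs, abs_of_nonneg (aux_min_abs_nonneg _)]
    exact min_le_right _ _

omit [IsProbabilityMeasure P] in
lemma aux_probDist_nonneg (X Y : Ω → ℝ) : 0 ≤ probDist P X Y :=
  integral_nonneg fun _ω => aux_min_abs_nonneg _

lemma aux_probDist_le_one (X Y : Ω → ℝ) : probDist P X Y ≤ 1 := by
  unfold probDist
  by_cases h : Integrable (fun ω => min |X ω - Y ω| 1) P
  · calc ∫ ω, min |X ω - Y ω| 1 ∂P ≤ ∫ _ω, (1 : ℝ) ∂P :=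
        integral_mono h (integrable_const 1) fun ω => min_le_right _ _
      _ = 1 := by simp
  · rw [integral_undef h]; exact one_pos.le

omit [IsProbabilityMeasure P] in
lemma aux_probDist_congr_left {X X' : Ω → ℝ} (Y : Ω → ℝ) (h : X =ᵐ[P] X') :
    probDist P X Y = probDist P X' Y := by
  refine integral_congr_ae ?_
  filter_upwards [h] with ω hω
  rw [hω]

omit [IsProbabilityMeasure P] in
lemma aux_abs_min_triangle (x y z : ℝ) :
    min |x - z| 1 ≤ min |x - y| 1 + min |y - z| 1 := by
  rcases le_or_gt |x - y| 1 with h1 | h1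
  · rcases le_or_gt |y - z| 1 with h2 | h2
    · rw [min_eq_left h1, min_eq_left h2]
      exact le_trans (min_le_left _ _) (by
        have := abs_sub_le x y z; linarith)
    · rw [min_eq_right h2.le]
      have := aux_min_abs_nonneg (x - y)
      have := min_le_right |x - z| 1
      linarith
  · rw [min_eq_right h1.le]
    have := aux_min_abs_nonneg (y - z)
    have := min_le_right |x - z| 1
    linarith

lemma aux_probDist_triangle {X Y Z : Ω → ℝ} (hX : AEStronglyMeasurable X P)
    (hY : AEStronglyMeasurable Y P) (hZ : AEStronglyMeasurable Z P) :
    probDist P X Z ≤ probDist P X Y + probDist P Y Z := by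
  unfold probDist
  have h1 : Integrable (fun ω => min |X ω - Y ω| 1) P := aux_integrable_min_abs P (hX.sub hY)
  have h2 : Integrable (fun ω => min |Y ω - Z ω| 1) P := aux_integrable_min_abs P (hY.sub hZ)
  have h3 : Integrable (fun ω => min |X ω - Z ω| 1) P := aux_integrable_min_abs P (hX.sub hZ)
  rw [← integral_add h1 h2]
  exact integral_mono h3 (h1.add h2) fun ω => aux_abs_min_triangle _ _ _

lemma aux_probDist_le_integral {X Y : Ω → ℝ} (hXY : Integrable (fun ω => X ω - Y ω) P) :
    probDist P X Y ≤ ∫ ω, |X ω - Y ω| ∂P :=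
  integral_mono (aux_integrable_min_abs P hXY.1) hXY.abs fun ω => min_le_left _ _

lemma aux_tendsto_probDist_zero {V : ℕ → Ω → ℝ} (hm : ∀ n, AEStronglyMeasurable (V n) P)
    (h : TendstoInMeasure P V atTop (fun _ => (0 : ℝ))) :
    Tendsto (fun n => probDist P (V n) (fun _ => 0)) atTop (nhds 0) := by
  rw [NormedAddCommGroup.tendsto_nhds_zero]
  intro ε hε
  set ε' := min (ε / 2) (1 / 2) with hε'
  have hε'pos : 0 < ε' := lt_min (by linarith) (by norm_num)
  have hε'le : ε' ≤ ε / 2 := min_le_left _ _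
  have hmeas : Tendsto (fun n => P {ω | ε' ≤ dist (V n ω) ((fun _ => (0:ℝ)) ω)})
      atTop (nhds 0) := tendstoInMeasure_iff_dist.mp h ε' hε'pos
  have htoReal : Tendsto (fun n => (P {ω | ε' ≤ dist (V n ω) ((fun _ => (0:ℝ)) ω)}).toReal)
      atTop (nhds 0) := by
    have := (ENNReal.tendsto_toReal (by norm_num : (0:ℝ≥0∞) ≠ ⊤)).comp hmeas
    simpa [Function.comp_def] using this
  filter_upwards [htoReal.eventually (gt_mem_nhds (by linarith : (0:ℝ) < ε / 2))] with n hn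
  have key : probDist P (V n) (fun _ => 0) ≤ ε' + (P {ω | ε' ≤ dist (V n ω) 0}).toReal := by
    set W := (hm n).mk (V n) with hW
    have hWm : StronglyMeasurable W := (hm n).stronglyMeasurable_mk
    have hWe : V n =ᵐ[P] W := (hm n).ae_eq_mk
    have hseteq : {ω | ε' ≤ dist (V n ω) 0} =ᵐ[P] {ω | ε' ≤ dist (W ω) 0} := by
      filter_upwards [hWe] with ω hω
      show (ε' ≤ dist (V n ω) 0) = (ε' ≤ dist (W ω) 0)
      rw [hω]
    have hsetm : MeasurableSet {ω | ε' ≤ dist (W ω) 0} := by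
      have : Measurable fun ω => dist (W ω) 0 := (hWm.measurable).dist measurable_const
      exact measurableSet_le measurable_const this
    rw [aux_probDist_congr_left P _ hWe, measure_congr hseteq]
    have hpt : ∀ ω, min |W ω - 0| 1 ≤ ε' +
        Set.indicator {ω | ε' ≤ dist (W ω) 0} (fun _ => (1:ℝ)) ω := by
      intro ω
      simp only [Set.indicator_apply]
      by_cases hω : ω ∈ {ω | ε' ≤ dist (W ω) 0}
      · rw [if_pos hω]
        have := min_le_right |W ω - 0| 1
        linarith [hε'pos.le]
      · rw [if_neg hω]
        have hω' : ¬ ε' ≤ dist (W ω) 0 := hω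
        push_neg at hω'
        rw [Real.dist_eq, sub_zero] at hω'
        rw [add_zero]
        exact le_trans (min_le_left _ _) (by rw [sub_zero]; exact hω'.le)
    calc probDist P W (fun _ => 0) ≤
        ∫ ω, (ε' + Set.indicator {ω | ε' ≤ dist (W ω) 0} (fun _ => (1:ℝ)) ω) ∂P := by
          refine integral_mono (aux_integrable_min_abs P
            (hWm.aestronglyMeasurable.sub aestronglyMeasurable_const) :
              Integrable (fun ω => min |W ω - (fun _ => (0:ℝ)) ω| 1) P) ?_ hpt
          exact (integrable_const _).add
            ((integrable_indicator_iff hsetm).mpr (integrableOn_const (measure_ne_top _ _)))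
      _ = ε' + (P {ω | ε' ≤ dist (W ω) 0}).toReal := by
          rw [integral_add (integrable_const _)
            ((integrable_indicator_iff hsetm).mpr (integrableOn_const (measure_ne_top _ _))),
            integral_indicator hsetm]
          simp
          rfl
  have h0 : 0 ≤ probDist P (V n) (fun _ => 0) := aux_probDist_nonneg P _ _
  rw [Real.norm_eq_abs, abs_of_nonneg h0]
  calc probDist P (V n) (fun _ => 0) ≤ ε' + (P {ω | ε' ≤ dist (V n ω) 0}).toReal := key
    _ < ε / 2 + ε / 2 := by
        refine add_lt_add_of_le_of_lt hε'le ?_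
        simpa using hn
    _ = ε := by ring

lemma aux_series_facts (R : ℕ → Ω → ℝ) (hint : ∀ j, Integrable (R j) P) {C : ℝ}
    (hC : ∀ j, (∫ ω, |R j ω| ∂P) ≤ C)
    (a : ℕ → ℝ) (ha : Summable fun l => |a l|) :
    (∀ᵐ ω ∂P, Summable (fun l => a l * R l ω)) ∧
    Integrable (fun ω => ∑' l, a l * R l ω) P ∧
    (∫ ω, |∑' l, a l * R l ω| ∂P) ≤ C * ∑' l, |a l| := by
  have hC0 : 0 ≤ C := le_trans (integral_nonneg fun ω => abs_nonneg _) (hC 0)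
  set f : ℕ → Ω → ℝ := fun l ω => a l * R l ω with hf
  have hfint : ∀ l, Integrable (f l) P := fun l => (hint l).const_mul _
  have hfm : ∀ l, AEStronglyMeasurable (f l) P := fun l => (hfint l).1
  have hnorm : ∀ l, (∫ ω, ‖f l ω‖ ∂P) ≤ |a l| * C := by
    intro l
    have : (fun ω => ‖f l ω‖) = fun ω => |a l| * |R l ω| := by
      funext ω; simp [hf, abs_mul]
    rw [this, integral_const_mul]
    exact mul_le_mul_of_nonneg_left (hC l) (abs_nonneg _)
  have hS : (∑' l, ∫⁻ ω, ‖f l ω‖₊ ∂P) ≤ ENNReal.ofReal (C * ∑' l, |a l|) := by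
    calc (∑' l, ∫⁻ ω, ‖f l ω‖₊ ∂P) = ∑' l, ENNReal.ofReal (∫ ω, ‖f l ω‖ ∂P) := by
          refine tsum_congr fun l => ?_
          exact (ofReal_integral_norm_eq_lintegral_enorm (hfint l)).symm
      _ ≤ ∑' l, ENNReal.ofReal (|a l| * C) := by
          exact ENNReal.tsum_le_tsum fun l => ENNReal.ofReal_le_ofReal (hnorm l)
      _ = ENNReal.ofReal (∑' l, |a l| * C) := by
          rw [ENNReal.ofReal_tsum_of_nonneg (fun l => mul_nonneg (abs_nonneg _) hC0)
            (ha.mul_right C)]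
      _ = ENNReal.ofReal (C * ∑' l, |a l|) := by rw [tsum_mul_right, mul_comm]
  have hStop : (∑' l, ∫⁻ ω, ‖f l ω‖₊ ∂P) ≠ ⊤ := ne_top_of_le_ne_top ENNReal.ofReal_ne_top hS
  have hsummae : ∀ᵐ ω ∂P, Summable fun l => ‖f l ω‖ := by
    have h1 : ∫⁻ ω, (∑' l, (‖f l ω‖₊ : ℝ≥0∞)) ∂P ≠ ⊤ := by
      rw [lintegral_tsum (f := fun l ω => (‖f l ω‖₊ : ℝ≥0∞)) fun l => (hfm l).enorm]; exact hStop
    refine (ae_lt_top' (AEMeasurable.ennreal_tsum fun l => (hfm l).enorm) h1).mono ?_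
    intro ω hω
    have := ENNReal.tsum_coe_ne_top_iff_summable.mp hω.ne
    exact (NNReal.summable_coe.mpr this).congr fun l => by simp [coe_nnnorm]
  have hsumm : ∀ᵐ ω ∂P, Summable fun l => f l ω := hsummae.mono fun ω h => h.of_norm
  have hmeas : AEStronglyMeasurable (fun ω => ∑' l, f l ω) P := by
    refine aestronglyMeasurable_of_tendsto_ae atTop
      (fun n => Finset.aestronglyMeasurable_fun_sum (Finset.range n) fun l _ => hfm l) ?_
    filter_upwards [hsumm] with ω hω
    exact hω.hasSum.tendsto_sum_nat
  refine ⟨hsumm, ?_, ?_⟩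
  · refine ⟨hmeas, ?_⟩
    have hle : ∀ᵐ ω ∂P, (‖∑' l, f l ω‖₊ : ℝ≥0∞) ≤ ∑' l, (‖f l ω‖₊ : ℝ≥0∞) := by
      filter_upwards [hsummae] with ω hω
      calc (‖∑' l, f l ω‖₊ : ℝ≥0∞) = ENNReal.ofReal ‖∑' l, f l ω‖ := by
            exact (ofReal_norm _).symm
        _ ≤ ENNReal.ofReal (∑' l, ‖f l ω‖) :=
            ENNReal.ofReal_le_ofReal (norm_tsum_le_tsum_norm hω)
        _ = ∑' l, ENNReal.ofReal ‖f l ω‖ :=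
            ENNReal.ofReal_tsum_of_nonneg (fun l => norm_nonneg _) hω
        _ = ∑' l, (‖f l ω‖₊ : ℝ≥0∞) :=
            tsum_congr fun l => ofReal_norm (f l ω)
    calc ∫⁻ ω, ‖∑' l, f l ω‖₊ ∂P ≤ ∫⁻ ω, ∑' l, (‖f l ω‖₊ : ℝ≥0∞) ∂P := lintegral_mono_ae hle
      _ = ∑' l, ∫⁻ ω, ‖f l ω‖₊ ∂P := lintegral_tsum fun l => (hfm l).enorm
      _ < ⊤ := lt_top_iff_ne_top.mpr hStop
  · have habs : AEStronglyMeasurable (fun ω => |∑' l, f l ω|) P := by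
      simpa [Real.norm_eq_abs] using hmeas.norm
    rw [integral_eq_lintegral_of_nonneg_ae (Eventually.of_forall fun ω => abs_nonneg _) habs]
    have hle2 : ∫⁻ ω, ENNReal.ofReal |∑' l, f l ω| ∂P ≤ ENNReal.ofReal (C * ∑' l, |a l|) := by
      have hle : ∀ᵐ ω ∂P, ENNReal.ofReal |∑' l, f l ω| ≤ ∑' l, (‖f l ω‖₊ : ℝ≥0∞) := by
        filter_upwards [hsummae] with ω hω
        calc ENNReal.ofReal |∑' l, f l ω| = ENNReal.ofReal ‖∑' l, f l ω‖ := by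
              rw [Real.norm_eq_abs]
          _ ≤ ENNReal.ofReal (∑' l, ‖f l ω‖) :=
              ENNReal.ofReal_le_ofReal (norm_tsum_le_tsum_norm hω)
          _ = ∑' l, ENNReal.ofReal ‖f l ω‖ :=
              ENNReal.ofReal_tsum_of_nonneg (fun l => norm_nonneg _) hω
          _ = ∑' l, (‖f l ω‖₊ : ℝ≥0∞) :=
              tsum_congr fun l => ofReal_norm (f l ω)
      calc ∫⁻ ω, ENNReal.ofReal |∑' l, f l ω| ∂P
          ≤ ∫⁻ ω, ∑' l, (‖f l ω‖₊ : ℝ≥0∞) ∂P := lintegral_mono_ae hle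
        _ = ∑' l, ∫⁻ ω, ‖f l ω‖₊ ∂P := lintegral_tsum fun l => (hfm l).enorm
        _ ≤ ENNReal.ofReal (C * ∑' l, |a l|) := hS
    calc (∫⁻ ω, ENNReal.ofReal |∑' l, f l ω| ∂P).toReal
        ≤ (ENNReal.ofReal (C * ∑' l, |a l|)).toReal :=
          ENNReal.toReal_mono ENNReal.ofReal_ne_top hle2
      _ ≤ C * ∑' l, |a l| := by
          rw [ENNReal.toReal_ofReal']
          exact max_le le_rfl (mul_nonneg hC0 (tsum_nonneg fun l => abs_nonneg _))

end AuxPaper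

/-- Proposition 4.9: the map `T((a_k)) = Σ_k a_k R_k` is (sequentially) continuous from the closed
unit ball of `ℓ¹` with coordinatewise convergence into `L⁰(P)` with the metric of convergence
in probability, and its image `L = T(B)` is (sequentially) compact for that metric. -/
theorem statement16 (P : Measure Ω) [IsProbabilityMeasure P]
    (R : ℕ → Ω → ℝ) (hint : ∀ j, Integrable (R j) P)
    (hbdd : ∃ C : ℝ, ∀ j, (∫ ω, |R j ω| ∂P) ≤ C)
    (hfcc : ∀ V : ℕ → Ω → ℝ,
      (∀ m, V m ∈ convexHull ℝ ((R '' {j | m ≤ j}) ∪ ((fun j => -R j) '' {j | m ≤ j}))) →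
      TendstoInMeasure P V atTop (fun _ => (0 : ℝ))) :
    (∀ (a : ℕ → ℕ → ℝ) (b : ℕ → ℝ),
      (∀ j, Summable (fun l => |a j l|) ∧ (∑' l, |a j l|) ≤ 1) →
      (Summable (fun l => |b l|) ∧ (∑' l, |b l|) ≤ 1) →
      (∀ l, Tendsto (fun j => a j l) atTop (nhds (b l))) →
      Tendsto (fun j => probDist P (fun ω => ∑' l, a j l * R l ω)
        (fun ω => ∑' l, b l * R l ω)) atTop (nhds 0)) ∧
    (∀ G : ℕ → Ω → ℝ, (∀ j, G j ∈ Lset R) →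
      ∃ φ : ℕ → ℕ, StrictMono φ ∧ ∃ G₀ ∈ Lset R,
        Tendsto (fun j => probDist P (G (φ j)) G₀) atTop (nhds 0)) := by
  obtain ⟨C, hC⟩ := hbdd
  have hC0 : 0 ≤ C := le_trans (integral_nonneg fun ω => abs_nonneg _) (hC 0)
  -- the convex hulls and their sup-distances
  set hull : ℕ → Set (Ω → ℝ) := fun m =>
    convexHull ℝ ((R '' {j | m ≤ j}) ∪ ((fun j => -R j) '' {j | m ≤ j})) with hhull
  have hullMeas : ∀ m, ∀ W ∈ hull m, AEStronglyMeasurable W P := by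
    intro m
    have hconv : Convex ℝ {f : Ω → ℝ | AEStronglyMeasurable f P} := by
      intro f hf g hg p q hp hq hpq
      exact (hf.const_smul p).add (hg.const_smul q)
    have hsub : (R '' {j | m ≤ j}) ∪ ((fun j => -R j) '' {j | m ≤ j}) ⊆
        {f : Ω → ℝ | AEStronglyMeasurable f P} := by
      rintro _ (⟨j, _, rfl⟩ | ⟨j, _, rfl⟩)
      · exact (hint j).1
      · exact (hint j).1.neg
    exact fun W hW => convexHull_min hsub hconv hW
  set vals : ℕ → Set ℝ := fun m => (fun W => probDist P W (fun _ => 0)) '' hull m with hvals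
  have hullne : ∀ m, (hull m).Nonempty := fun m =>
    ⟨R m, subset_convexHull _ _ (Or.inl ⟨m, by simp, rfl⟩)⟩
  have valsne : ∀ m, (vals m).Nonempty := fun m => (hullne m).image _
  have valsbdd : ∀ m, BddAbove (vals m) := by
    intro m
    refine ⟨1, ?_⟩
    rintro _ ⟨W, _, rfl⟩
    exact aux_probDist_le_one P _ _
  set t : ℕ → ℝ := fun m => sSup (vals m) with ht
  have ht_ub : ∀ m, ∀ W ∈ hull m, probDist P W (fun _ => 0) ≤ t m :=
    fun m W hW => le_csSup (valsbdd m) ⟨W, hW, rfl⟩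
  have ht_nonneg : ∀ m, 0 ≤ t m := fun m =>
    le_trans (aux_probDist_nonneg P _ _) (ht_ub m (R m) (subset_convexHull _ _ (Or.inl ⟨m, by simp, rfl⟩)))
  have hanti : Antitone t := by
    intro m m' h
    refine csSup_le_csSup (valsbdd m) (valsne m') (Set.image_mono ?_)
    refine convexHull_mono (Set.union_subset_union (Set.image_mono ?_) (Set.image_mono ?_)) <;>
      · intro j hj; exact le_trans h hj
  have ht0 : Tendsto t atTop (nhds 0) := by
    have hbb : BddBelow (Set.range t) := ⟨0, by rintro _ ⟨m, rfl⟩; exact ht_nonneg m⟩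
    have hlim := tendsto_atTop_ciInf hanti hbb
    suffices h : (⨅ m, t m) = 0 by rwa [h] at hlim
    refine le_antisymm ?_ (le_ciInf fun m => ht_nonneg m)
    by_contra hL
    push_neg at hL
    set L := ⨅ m, t m with hLdef
    have hsel : ∀ m, ∃ W ∈ hull m, L / 2 < probDist P W (fun _ => 0) := by
      intro m
      have h1 : L / 2 < t m := lt_of_lt_of_le (by linarith) (ciInf_le hbb m)
      obtain ⟨v, hv, hv2⟩ := exists_lt_of_lt_csSup (valsne m) h1
      obtain ⟨W, hW, rfl⟩ := hv
      exact ⟨W, hW, hv2⟩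
    choose V hVmem hVgt using hsel
    have h1 := hfcc V hVmem
    have h2 := aux_tendsto_probDist_zero P (fun m => hullMeas m (V m) (hVmem m)) h1
    obtain ⟨m, hm⟩ := (h2.eventually (gt_mem_nhds (by linarith : (0:ℝ) < L/2))).exists
    exact absurd hm (not_lt.mpr (hVgt m).le)
  -- tail estimate
  have htail : ∀ (m : ℕ) (c : ℕ → ℝ), Summable (fun l => |c l|) → (∑' l, |c l|) ≤ 1 →
      (∀ l, l < m → c l = 0) →
      probDist P (fun ω => ∑' l, c l * R l ω) (fun _ => 0) ≤ t m := by
    intro m c hc hc1 hc0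
    refine le_of_forall_pos_le_add ?_
    intro ε hε
    have htt0 : Tendsto (fun N => C * ∑' l, |c (l + N)|) atTop (nhds 0) := by
      have h1 : Tendsto (fun N => ∑' l, |c (l + N)|) atTop (nhds 0) :=
        tendsto_sum_nat_add (fun l => |c l|)
      simpa using h1.const_mul C
    obtain ⟨N, hNm, hNε⟩ : ∃ N, m ≤ N ∧ C * (∑' l, |c (l + N)|) < ε := by
      obtain ⟨N, hN1, hN2⟩ :=
        ((htt0.eventually (gt_mem_nhds hε)).and (eventually_ge_atTop m)).exists
      exact ⟨N, hN2, hN1⟩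
    set ctail : ℕ → ℝ := fun l => if l < N then 0 else c l with hctail
    have hctail_summ : Summable (fun l => |ctail l|) := by
      refine Summable.of_nonneg_of_le (fun l => abs_nonneg _) (fun l => ?_) hc
      by_cases h : l < N <;> simp [hctail, h, abs_nonneg]
    have facts_c := aux_series_facts P R hint hC c hc
    have facts_ct := aux_series_facts P R hint hC ctail hctail_summ
    have htteq : (∑' l, |ctail l|) = ∑' l, |c (l + N)| := by
      rw [← Summable.sum_add_tsum_nat_add N hctail_summ]
      have h1 : ∀ l ∈ Finset.range N, |ctail l| = 0 := by
        intro l hl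
        simp [hctail, Finset.mem_range.mp hl]
      rw [Finset.sum_eq_zero h1, zero_add]
      refine tsum_congr fun l => ?_
      have : ¬ (l + N < N) := by omega
      simp [hctail, this]
    set SN : Ω → ℝ := fun ω => ∑ l ∈ Finset.range N, c l * R l ω with hSN
    have hSNmeas : AEStronglyMeasurable SN P :=
      Finset.aestronglyMeasurable_fun_sum _ (fun l _ => ((hint l).const_mul _).1)
    have hdecomp : ∀ᵐ ω ∂P, (∑' l, c l * R l ω) - SN ω = ∑' l, ctail l * R l ω := by
      filter_upwards [facts_c.1] with ω hω
      have e1 := Summable.sum_add_tsum_nat_add N hω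
      have hω2 : Summable (fun l => ctail l * R l ω) := by
        refine (summable_nat_add_iff N).mp ?_
        refine (((summable_nat_add_iff N).mpr hω)).congr fun l => ?_
        have : ¬ (l + N < N) := by omega
        simp [hctail, this]
      have e2 := Summable.sum_add_tsum_nat_add N hω2
      have h1 : ∑ l ∈ Finset.range N, ctail l * R l ω = 0 := by
        refine Finset.sum_eq_zero fun l hl => ?_
        simp [hctail, Finset.mem_range.mp hl]
      have h2 : (∑' l, ctail (l + N) * R (l + N) ω) = ∑' l, c (l + N) * R (l + N) ω := by
        refine tsum_congr fun l => ?_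
        have : ¬ (l + N < N) := by omega
        simp [hctail, this]
      rw [h1, zero_add, h2] at e2
      rw [← e2, ← e1, hSN]
      ring
    have hFcmeas : AEStronglyMeasurable (fun ω => ∑' l, c l * R l ω) P := facts_c.2.1.1
    have partA : probDist P (fun ω => ∑' l, c l * R l ω) SN ≤ ε := by
      have heq : probDist P (fun ω => ∑' l, c l * R l ω) SN
          = probDist P (fun ω => ∑' l, ctail l * R l ω) (fun _ => 0) := by
        refine integral_congr_ae ?_
        filter_upwards [hdecomp] with ω hω
        rw [show (∑' l, ctail l * R l ω) - (fun _ : Ω => (0:ℝ)) ω = ∑' l, ctail l * R l ω by simp,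
          ← hω]
      rw [heq]
      have hint2 : Integrable (fun ω => (∑' l, ctail l * R l ω) - (fun _ : Ω => (0:ℝ)) ω) P := by
        simpa using facts_ct.2.1
      calc probDist P (fun ω => ∑' l, ctail l * R l ω) (fun _ => 0)
          ≤ ∫ ω, |(∑' l, ctail l * R l ω) - (fun _ : Ω => (0:ℝ)) ω| ∂P :=
            aux_probDist_le_integral P hint2
        _ = ∫ ω, |∑' l, ctail l * R l ω| ∂P := by
            refine integral_congr_ae (Eventually.of_forall fun ω => ?_); simp
        _ ≤ C * ∑' l, |ctail l| := facts_ct.2.2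
        _ = C * ∑' l, |c (l + N)| := by rw [htteq]
        _ ≤ ε := hNε.le
    have partB : probDist P SN (fun _ => 0) ≤ t m := by
      set s := ∑ l ∈ Finset.range N, |c l| with hs
      have hsnn : 0 ≤ s := Finset.sum_nonneg fun l _ => abs_nonneg _
      have hs1 : s ≤ 1 :=
        le_trans (Summable.sum_le_tsum (Finset.range N) (fun l _ => abs_nonneg _) hc) hc1
      rcases eq_or_lt_of_le hsnn with hs0 | hs0
      · have hz : ∀ l ∈ Finset.range N, c l = 0 := by
          intro l hl
          have := (Finset.sum_eq_zero_iff_of_nonneg (fun l _ => abs_nonneg (c l))).mp hs0.symm l hl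
          exact abs_eq_zero.mp this
        have : SN = fun _ => 0 := by
          funext ω
          exact Finset.sum_eq_zero fun l hl => by rw [hz l hl, zero_mul]
        rw [this]
        have : probDist P (fun _ : Ω => (0:ℝ)) (fun _ => 0) = 0 := by
          unfold probDist; simp
        rw [this]; exact ht_nonneg m
      · set T := (Finset.range N).filter (fun l => c l ≠ 0) with hT
        set z : ℕ → Ω → ℝ := fun l => if 0 < c l then R l else -R l with hz
        have hwsum : ∑ l ∈ T, |c l| = s := by
          rw [hs, hT]
          exact Finset.sum_filter_of_ne fun l _ h => abs_ne_zero.mp h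
        have hzs : ∀ l ∈ T, z l ∈ (R '' {j | m ≤ j}) ∪ ((fun j => -R j) '' {j | m ≤ j}) := by
          intro l hl
          have hcl : c l ≠ 0 := (Finset.mem_filter.mp hl).2
          have hlm : m ≤ l := by
            by_contra h
            push_neg at h
            exact hcl (hc0 l h)
          by_cases hpos : 0 < c l
          · exact Or.inl ⟨l, hlm, by rw [hz]; simp [hpos]⟩
          · exact Or.inr ⟨l, hlm, by rw [hz]; simp [hpos]⟩
        have hWmem : T.centerMass (fun l => |c l|) z ∈ hull m :=
          T.centerMass_mem_convexHull (fun l _ => abs_nonneg _) (by rw [hwsum]; exact hs0) hzs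
        set W := T.centerMass (fun l => |c l|) z with hWdef
        have hcm : W = s⁻¹ • SN := by
          rw [hWdef, Finset.centerMass, hwsum]
          congr 1
          have h1 : ∑ l ∈ T, |c l| • z l = ∑ l ∈ T, c l • R l := by
            refine Finset.sum_congr rfl fun l hl => ?_
            have hcl : c l ≠ 0 := (Finset.mem_filter.mp hl).2
            by_cases hpos : 0 < c l
            · rw [hz]; simp only [if_pos hpos]; rw [abs_of_pos hpos]
            · have hneg : c l < 0 := lt_of_le_of_ne (not_lt.mp hpos) hcl
              rw [hz]; simp only [if_neg hpos]
              rw [abs_of_neg hneg]; simp [neg_smul, smul_neg]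
          rw [h1, Finset.sum_filter_of_ne (fun l _ h => by
            intro hc'; exact h (by rw [hc', zero_smul]))]
          funext ω
          rw [hSN]
          simp [Finset.sum_apply]
        have hSW : ∀ ω, SN ω = s * W ω := by
          intro ω
          rw [hcm]
          simp only [Pi.smul_apply, smul_eq_mul]
          field_simp
        have hWm : AEStronglyMeasurable W P := hullMeas m W hWmem
        calc probDist P SN (fun _ => 0)
            ≤ probDist P W (fun _ => 0) := by
              unfold probDist
              refine integral_mono
                (aux_integrable_min_abs P (hSNmeas.sub aestronglyMeasurable_const) :
                  Integrable (fun ω => min |SN ω - (fun _ : Ω => (0:ℝ)) ω| 1) P)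
                (aux_integrable_min_abs P (hWm.sub aestronglyMeasurable_const) :
                  Integrable (fun ω => min |W ω - (fun _ : Ω => (0:ℝ)) ω| 1) P)
                fun ω => ?_
              simp only [sub_zero]
              refine min_le_min ?_ le_rfl
              rw [hSW ω, abs_mul, abs_of_nonneg hsnn]
              exact mul_le_of_le_one_left (abs_nonneg _) hs1
          _ ≤ t m := ht_ub m W hWmem
    calc probDist P (fun ω => ∑' l, c l * R l ω) (fun _ => 0)
        ≤ probDist P (fun ω => ∑' l, c l * R l ω) SN + probDist P SN (fun _ => 0) :=
          aux_probDist_triangle P hFcmeas hSNmeas aestronglyMeasurable_const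
      _ ≤ t m + ε := by linarith
  -- Part 1 : continuity
  have part1 : ∀ (a : ℕ → ℕ → ℝ) (b : ℕ → ℝ),
      (∀ j, Summable (fun l => |a j l|) ∧ (∑' l, |a j l|) ≤ 1) →
      (Summable (fun l => |b l|) ∧ (∑' l, |b l|) ≤ 1) →
      (∀ l, Tendsto (fun j => a j l) atTop (nhds (b l))) →
      Tendsto (fun j => probDist P (fun ω => ∑' l, a j l * R l ω)
        (fun ω => ∑' l, b l * R l ω)) atTop (nhds 0) := by
    intro a b ha hb hconv
    have hmin2 : ∀ x : ℝ, min |2 * x| 1 ≤ 2 * min |x| 1 := by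
      intro x
      rcases le_or_gt |x| 1 with h | h
      · rw [min_eq_left h, abs_mul]
        calc min (|2| * |x|) 1 ≤ |2| * |x| := min_le_left _ _
          _ = 2 * |x| := by norm_num
      · rw [min_eq_right h.le]
        calc min |2 * x| 1 ≤ 1 := min_le_right _ _
          _ ≤ 2 * 1 := by norm_num
    rw [NormedAddCommGroup.tendsto_nhds_zero]
    intro ε hε
    obtain ⟨m, hm⟩ := (ht0.eventually (gt_mem_nhds (show (0:ℝ) < ε/8 by linarith))).exists
    have hbs : Summable fun l => |b l| := hb.1
    have habs_s : ∀ j, Summable fun l => |a j l| := fun j => (ha j).1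
    have hd_summ : ∀ j, Summable fun l => |a j l - b l| := by
      intro j
      refine Summable.of_nonneg_of_le (fun l => abs_nonneg _) (fun l => ?_)
        ((habs_s j).add hbs)
      exact abs_sub (a j l) (b l)
    have hd_le : ∀ j, (∑' l, |a j l - b l|) ≤ 2 := by
      intro j
      calc (∑' l, |a j l - b l|) ≤ ∑' l, (|a j l| + |b l|) :=
            Summable.tsum_le_tsum (fun l => abs_sub (a j l) (b l)) (hd_summ j) ((habs_s j).add hbs)
        _ = (∑' l, |a j l|) + ∑' l, |b l| := Summable.tsum_add (habs_s j) hbs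
        _ ≤ 2 := by linarith [(ha j).2, hb.2]
    set dtail : ℕ → ℕ → ℝ := fun j l => if l < m then 0 else (a j l - b l) with hdt
    set dhead : ℕ → ℕ → ℝ := fun j l => if l < m then (a j l - b l) else 0 with hdh
    have hdt_summ : ∀ j, Summable fun l => |dtail j l| := by
      intro j
      refine Summable.of_nonneg_of_le (fun l => abs_nonneg _) (fun l => ?_) (hd_summ j)
      by_cases h : l < m <;> simp [hdt, h, abs_nonneg]
    have hdh_summ : ∀ j, Summable fun l => |dhead j l| := by
      intro j
      refine Summable.of_nonneg_of_le (fun l => abs_nonneg _) (fun l => ?_) (hd_summ j)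
      by_cases h : l < m <;> simp [hdh, h, abs_nonneg]
    have facts_a := fun j => aux_series_facts P R hint hC (a j) (habs_s j)
    have facts_b := aux_series_facts P R hint hC b hbs
    have facts_d := fun j => aux_series_facts P R hint hC (fun l => a j l - b l) (hd_summ j)
    have facts_dt := fun j => aux_series_facts P R hint hC (dtail j) (hdt_summ j)
    have facts_dh := fun j => aux_series_facts P R hint hC (dhead j) (hdh_summ j)
    have hdt2_summ : ∀ j, Summable fun l => |dtail j l / 2| := by
      intro j
      have heq : (fun l => |dtail j l / 2|) = fun l => |dtail j l| * 2⁻¹ := by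
        funext l; rw [abs_div, div_eq_mul_inv]; norm_num
      rw [heq]
      exact (hdt_summ j).mul_right _
    have facts_dt2 := fun j => aux_series_facts P R hint hC (fun l => dtail j l / 2) (hdt2_summ j)
    -- tail bound
    have htailb : ∀ j, probDist P (fun ω => ∑' l, dtail j l * R l ω) (fun _ => 0) ≤ 2 * t m := by
      intro j
      have h2 : ∀ ω, (∑' l, (dtail j l / 2) * R l ω) = (∑' l, dtail j l * R l ω) * 2⁻¹ := by
        intro ω
        rw [← tsum_mul_right]
        exact tsum_congr fun l => by ring
      have hle2 : (∑' l, |dtail j l / 2|) ≤ 1 := by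
        have heq : (∑' l, |dtail j l / 2|) = (∑' l, |dtail j l|) * 2⁻¹ := by
          rw [← tsum_mul_right]
          exact tsum_congr fun l => by rw [abs_div]; norm_num; ring
        have hdtle : (∑' l, |dtail j l|) ≤ ∑' l, |a j l - b l| := by
          refine Summable.tsum_le_tsum (fun l => ?_) (hdt_summ j) (hd_summ j)
          by_cases h : l < m <;> simp [hdt, h, abs_nonneg]
        rw [heq]
        have := hd_le j
        linarith
      have hz : ∀ l, l < m → dtail j l / 2 = 0 := fun l hl => by simp [hdt, hl]
      have hhalf := htail m (fun l => dtail j l / 2) (hdt2_summ j) hle2 hz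
      have hkey : probDist P (fun ω => ∑' l, dtail j l * R l ω) (fun _ => 0) ≤
          2 * probDist P (fun ω => ∑' l, (dtail j l / 2) * R l ω) (fun _ => 0) := by
        unfold probDist
        rw [← integral_const_mul]
        refine integral_mono
          (aux_integrable_min_abs P ((facts_dt j).2.1.1.sub aestronglyMeasurable_const) :
            Integrable (fun ω => min |(∑' l, dtail j l * R l ω) - (fun _ : Ω => (0:ℝ)) ω| 1) P)
          ((aux_integrable_min_abs P ((facts_dt2 j).2.1.1.sub aestronglyMeasurable_const) :
            Integrable (fun ω => min |(∑' l, (dtail j l / 2) * R l ω) - (fun _ : Ω => (0:ℝ)) ω| 1) P).const_mul 2)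
          fun ω => ?_
        simp only [sub_zero]
        have hrw : (∑' l, dtail j l * R l ω) = 2 * (∑' l, (dtail j l / 2) * R l ω) := by
          rw [h2 ω]; ring
        rw [hrw]
        exact hmin2 _
      calc probDist P (fun ω => ∑' l, dtail j l * R l ω) (fun _ => 0)
          ≤ 2 * probDist P (fun ω => ∑' l, (dtail j l / 2) * R l ω) (fun _ => 0) := hkey
        _ ≤ 2 * t m := by linarith [hhalf]
    -- head contribution
    have hheadto : Tendsto (fun j => C * ∑ l ∈ Finset.range m, |a j l - b l|) atTop (nhds 0) := by
      have h1 : Tendsto (fun j => ∑ l ∈ Finset.range m, |a j l - b l|) atTop (nhds 0) := by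
        have h2 := tendsto_finset_sum (Finset.range m)
          (fun l (_ : l ∈ Finset.range m) =>
            (((hconv l).sub tendsto_const_nhds).abs :
              Tendsto (fun j => |a j l - b l|) atTop (nhds |b l - b l|)))
        simpa using h2
      simpa using h1.const_mul C
    filter_upwards [hheadto.eventually (gt_mem_nhds (show (0:ℝ) < ε/2 by linarith))] with j hj
    have e_ab : probDist P (fun ω => ∑' l, a j l * R l ω) (fun ω => ∑' l, b l * R l ω)
        = probDist P (fun ω => ∑' l, (a j l - b l) * R l ω) (fun _ => 0) := by
      refine integral_congr_ae ?_
      filter_upwards [(facts_a j).1, facts_b.1] with ω h1 h2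
      have heq : (∑' l, (a j l - b l) * R l ω)
          = (∑' l, a j l * R l ω) - ∑' l, b l * R l ω := by
        rw [← Summable.tsum_sub h1 h2]
        exact tsum_congr fun l => by ring
      rw [heq]
      simp
    have e_split : probDist P (fun ω => ∑' l, (a j l - b l) * R l ω)
        (fun ω => ∑' l, dtail j l * R l ω)
        = probDist P (fun ω => ∑' l, dhead j l * R l ω) (fun _ => 0) := by
      refine integral_congr_ae ?_
      filter_upwards [(facts_dt j).1, (facts_dh j).1] with ω h1 h2
      have hsumd : Summable fun l => (a j l - b l) * R l ω := by
        refine (h2.add h1).congr fun l => ?_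
        by_cases hl : l < m <;> · simp [hdh, hdt, hl]
      have heq : (∑' l, (a j l - b l) * R l ω)
          = (∑' l, dhead j l * R l ω) + ∑' l, dtail j l * R l ω := by
        rw [← Summable.tsum_add h2 h1]
        refine tsum_congr fun l => ?_
        by_cases hl : l < m <;> · simp [hdh, hdt, hl]
      have heq2 : (∑' l, dhead j l * R l ω)
          = (∑' l, (a j l - b l) * R l ω) - ∑' l, dtail j l * R l ω := by
        rw [heq]; ring
      rw [← heq2]
      simp
    have h_head_le : probDist P (fun ω => ∑' l, (a j l - b l) * R l ω)
        (fun ω => ∑' l, dtail j l * R l ω) ≤ ε / 2 := by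
      rw [e_split]
      have hint2 : Integrable
          (fun ω => (∑' l, dhead j l * R l ω) - (fun _ : Ω => (0:ℝ)) ω) P := by
        simpa using (facts_dh j).2.1
      have htsum_head : (∑' l, |dhead j l|) = ∑ l ∈ Finset.range m, |a j l - b l| := by
        rw [tsum_eq_sum (s := Finset.range m) (fun l hl => ?_)]
        · refine Finset.sum_congr rfl fun l hl => ?_
          simp [hdh, Finset.mem_range.mp hl]
        · have : ¬ l < m := fun h => hl (Finset.mem_range.mpr h)
          simp [hdh, this]
      calc probDist P (fun ω => ∑' l, dhead j l * R l ω) (fun _ => 0)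
          ≤ ∫ ω, |(∑' l, dhead j l * R l ω) - (fun _ : Ω => (0:ℝ)) ω| ∂P :=
            aux_probDist_le_integral P hint2
        _ = ∫ ω, |∑' l, dhead j l * R l ω| ∂P := by
            refine integral_congr_ae (Eventually.of_forall fun ω => ?_); simp
        _ ≤ C * ∑' l, |dhead j l| := (facts_dh j).2.2
        _ = C * ∑ l ∈ Finset.range m, |a j l - b l| := by rw [htsum_head]
        _ ≤ ε / 2 := hj.le
    rw [Real.norm_eq_abs, abs_of_nonneg (aux_probDist_nonneg P _ _), e_ab]
    calc probDist P (fun ω => ∑' l, (a j l - b l) * R l ω) (fun _ => 0)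
        ≤ probDist P (fun ω => ∑' l, (a j l - b l) * R l ω)
            (fun ω => ∑' l, dtail j l * R l ω)
          + probDist P (fun ω => ∑' l, dtail j l * R l ω) (fun _ => 0) :=
          aux_probDist_triangle P (facts_d j).2.1.1 (facts_dt j).2.1.1
            aestronglyMeasurable_const
      _ ≤ ε / 2 + 2 * t m := add_le_add h_head_le (htailb j)
      _ < ε := by linarith
  refine ⟨part1, ?_⟩
  -- Part 2 : compactness
  intro G hG
  choose a ha using hG
  set K : Set (ℕ → ℝ) := Set.pi Set.univ (fun _ => Set.Icc (-1 : ℝ) 1) with hK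
  have hKc : IsCompact K := isCompact_univ_pi fun _ => isCompact_Icc
  have hmemK : ∀ j, a j ∈ K := by
    intro j l _
    have h1 : |a j l| ≤ 1 :=
      le_trans (Summable.le_tsum (ha j).1 l (fun l' _ => abs_nonneg _)) (ha j).2.1
    have h2 := abs_le.mp h1
    exact ⟨h2.1, h2.2⟩
  obtain ⟨b, hbK, φ, hφ, hconv⟩ := hKc.tendsto_subseq hmemK
  have hcoord : ∀ l, Tendsto (fun j => a (φ j) l) atTop (nhds (b l)) := fun l =>
    tendsto_pi_nhds.mp hconv l
  have hbound : ∀ n, (∑ l ∈ Finset.range n, |b l|) ≤ 1 := by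
    intro n
    have h1 : Tendsto (fun j => ∑ l ∈ Finset.range n, |a (φ j) l|) atTop
        (nhds (∑ l ∈ Finset.range n, |b l|)) :=
      tendsto_finset_sum _ fun l _ => (hcoord l).abs
    refine le_of_tendsto h1 (Eventually.of_forall fun j => ?_)
    exact le_trans (Summable.sum_le_tsum _ (fun l _ => abs_nonneg _) (ha (φ j)).1) (ha (φ j)).2.1
  have hbsumm : Summable fun l => |b l| :=
    summable_of_sum_range_le (fun l => abs_nonneg _) hbound
  have hble : (∑' l, |b l|) ≤ 1 :=
    Summable.tsum_le_of_sum_range_le hbsumm hbound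
  refine ⟨φ, hφ, (fun ω => ∑' l, b l * R l ω), ⟨b, hbsumm, hble, rfl⟩, ?_⟩
  have hmain := part1 (fun j => a (φ j)) b (fun j => ⟨(ha (φ j)).1, (ha (φ j)).2.1⟩)
    ⟨hbsumm, hble⟩ hcoord
  refine hmain.congr fun j => ?_
  rw [(ha (φ j)).2.2]

end Paper
end
end

section
/- Let (Ω,Σ,P) be a probability space, let X and Y be random variables, and let ε > 0 satisfy P(|X + Y| > ε) < ε. Assume there exist a measurable set A with P(A) = 1/2 and a real number c such that X ≤ c a.s. on A and X ≥ c a.s. on the complement of A, and assume that the indicator 1_A and Y are independent. Then P(|Y + c| > ε) < 4ε. -/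
open MeasureTheory Filter Set ProbabilityTheory

noncomputable section

namespace Paper

variable {Ω : Type*} [MeasurableSpace Ω]

/-- Lemma 5.2: if `P(|X + Y| > ε) < ε`, `X` is below `c` a.s. on a set `A` of measure `1/2` and
above `c` a.s. off `A`, and `1_A` is independent of `Y`, then `P(|Y + c| > ε) < 4ε`. -/
theorem statement18 (P : Measure Ω) [IsProbabilityMeasure P]
    (X Y : Ω → ℝ) (hX : Measurable X) (hY : Measurable Y)
    (ε c : ℝ) (hε : 0 < ε)
    (h1 : P {ω | ε < |X ω + Y ω|} < ENNReal.ofReal ε)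
    (A : Set Ω) (hA : MeasurableSet A) (hPA : P A = 1 / 2)
    (hXA : ∀ᵐ ω ∂P, ω ∈ A → X ω ≤ c)
    (hXAc : ∀ᵐ ω ∂P, ω ∉ A → c ≤ X ω)
    (hindep : IndepFun (A.indicator (fun _ => (1 : ℝ))) Y P) :
    P {ω | ε < |Y ω + c|} < ENNReal.ofReal (4 * ε) := by
  set f : Ω → ℝ := A.indicator (fun _ => (1 : ℝ)) with hf
  have hfA : f ⁻¹' {1} = A := by
    ext ω; by_cases h : ω ∈ A <;> simp [hf, Set.indicator_apply, h]
  have hfAc : f ⁻¹' {0} = Aᶜ := by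
    ext ω; by_cases h : ω ∈ A <;> simp [hf, Set.indicator_apply, h]
  have hPAc : P Aᶜ = 1 / 2 := by
    rw [measure_compl hA (measure_ne_top _ _), hPA, measure_univ]
    simp [ENNReal.sub_eq_of_eq_add]
  -- set where Y + c < -ε
  have hq : P (A ∩ Y ⁻¹' {y | y + c < -ε}) = (1/2) * P (Y ⁻¹' {y | y + c < -ε}) := by
    have := hindep.measure_inter_preimage_eq_mul (s := {1}) (t := {y | y + c < -ε})
      (measurableSet_singleton _) (by
        have : {y : ℝ | y + c < -ε} = Set.Iio (-ε - c) := by ext y; simp [Set.mem_Iio]; constructor <;> intro h <;> linarith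
        rw [this]; exact measurableSet_Iio)
    rw [hfA] at this; rw [this, hPA]
  have hp : P (Aᶜ ∩ Y ⁻¹' {y | ε < y + c}) = (1/2) * P (Y ⁻¹' {y | ε < y + c}) := by
    have := hindep.measure_inter_preimage_eq_mul (s := {0}) (t := {y | ε < y + c})
      (measurableSet_singleton _) (by
        have : {y : ℝ | ε < y + c} = Set.Ioi (ε - c) := by ext y; simp [Set.mem_Ioi]; constructor <;> intro h <;> linarith
        rw [this]; exact measurableSet_Ioi)
    rw [hfAc] at this; rw [this, hPAc]
  -- a.e. inclusions
  have hsub1 : P (A ∩ Y ⁻¹' {y | y + c < -ε}) ≤ P {ω | ε < |X ω + Y ω|} := by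
    apply measure_mono_ae
    filter_upwards [hXA] with ω h hmem
    obtain ⟨h1, h2⟩ := hmem
    have := h h1
    simp only [Set.mem_preimage, Set.mem_setOf_eq] at h2
    show ε < |X ω + Y ω|
    rw [lt_abs]; right; linarith
  have hsub2 : P (Aᶜ ∩ Y ⁻¹' {y | ε < y + c}) ≤ P {ω | ε < |X ω + Y ω|} := by
    apply measure_mono_ae
    filter_upwards [hXAc] with ω h hmem
    obtain ⟨h1, h2⟩ := hmem
    have := h h1
    simp only [Set.mem_preimage, Set.mem_setOf_eq] at h2
    show ε < |X ω + Y ω|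
    rw [lt_abs]; left; linarith
  have hq2 : P (Y ⁻¹' {y | y + c < -ε}) < ENNReal.ofReal (2 * ε) := by
    have h3 : (1/2 : ENNReal) * P (Y ⁻¹' {y | y + c < -ε}) < ENNReal.ofReal ε := by
      rw [← hq]; exact lt_of_le_of_lt hsub1 h1
    have h4 : (2:ENNReal) * (1/2) = 1 := by
      rw [one_div, ENNReal.mul_inv_cancel] <;> norm_num
    have h5 : ENNReal.ofReal (2 * ε) = 2 * ENNReal.ofReal ε := by
      rw [ENNReal.ofReal_mul (by norm_num)]; norm_num
    rw [h5]
    calc P (Y ⁻¹' {y | y + c < -ε})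
        = 2 * (1/2) * P (Y ⁻¹' {y | y + c < -ε}) := by rw [h4, one_mul]
      _ = 2 * ((1/2) * P (Y ⁻¹' {y | y + c < -ε})) := by ring
      _ < 2 * ENNReal.ofReal ε := (ENNReal.mul_lt_mul_iff_right (by norm_num) (by norm_num)).mpr h3
  have hp2 : P (Y ⁻¹' {y | ε < y + c}) < ENNReal.ofReal (2 * ε) := by
    have h3 : (1/2 : ENNReal) * P (Y ⁻¹' {y | ε < y + c}) < ENNReal.ofReal ε := by
      rw [← hp]; exact lt_of_le_of_lt hsub2 h1
    have h4 : (2:ENNReal) * (1/2) = 1 := by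
      rw [one_div, ENNReal.mul_inv_cancel] <;> norm_num
    have h5 : ENNReal.ofReal (2 * ε) = 2 * ENNReal.ofReal ε := by
      rw [ENNReal.ofReal_mul (by norm_num)]; norm_num
    rw [h5]
    calc P (Y ⁻¹' {y | ε < y + c})
        = 2 * (1/2) * P (Y ⁻¹' {y | ε < y + c}) := by rw [h4, one_mul]
      _ = 2 * ((1/2) * P (Y ⁻¹' {y | ε < y + c})) := by ring
      _ < 2 * ENNReal.ofReal ε := (ENNReal.mul_lt_mul_iff_right (by norm_num) (by norm_num)).mpr h3
  have hsplit : {ω | ε < |Y ω + c|} ⊆ (Y ⁻¹' {y | ε < y + c}) ∪ (Y ⁻¹' {y | y + c < -ε}) := by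
    intro ω h
    simp only [Set.mem_setOf_eq] at h
    rw [lt_abs] at h
    rcases h with h | h
    · left; exact h
    · right; simp only [Set.mem_preimage, Set.mem_setOf_eq]; linarith
  calc P {ω | ε < |Y ω + c|} ≤ P (Y ⁻¹' {y | ε < y + c}) + P (Y ⁻¹' {y | y + c < -ε}) :=
        le_trans (measure_mono hsplit) (measure_union_le _ _)
    _ < ENNReal.ofReal (2 * ε) + ENNReal.ofReal (2 * ε) := ENNReal.add_lt_add hp2 hq2
    _ = ENNReal.ofReal (4 * ε) := by rw [← ENNReal.ofReal_add (by positivity) (by positivity)]; ring_nf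

end Paper
end
end
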